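/- arXiv:1809.04628 — 7 statements merged into one kernel-verified Lean document; each statement's English description precedes it below -/
import Mathlib

section
/- Let p ≥ 2 be an integer and r ∈ {1,…,p−1}. Then for every n ∈ ℕ, the coefficient D_{p,r}(n) satisfies D_{p,r}(n) = ∏_{i=0}^{p−1} (−1)^{i·N_p(i,n)} · C(r,i)^{N_p(i,n)}, with the conventions C(a,b) = 0 for b > a and 0^0 = 1. -/
open PowerSeries Finset

/-- The number of digits equal to `i` in the base-`p` representation of `n`. -/
def Np (p i n : ℕ) : ℕ := (Nat.digits p n).count i

/-- `Dcoef p r n` is the coefficient of `x^n` in `∏_{i=0}^∞ (1 - x^{p^i})^r`.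
Since `p ≥ 2`, the factors with index `i > n` do not affect the coefficient of `x^n`,
so the product may be truncated at `i = n`. -/
noncomputable def Dcoef (p r n : ℕ) : ℤ :=
  PowerSeries.coeff (R := ℤ) n (∏ i ∈ Finset.range (n + 1), (1 - PowerSeries.X ^ p ^ i) ^ r)

/-- `Dp p n = D_{p,p-1}(n)`. -/
noncomputable def Dp (p n : ℕ) : ℤ := Dcoef p (p - 1) n

/-- `Acoef m k n` is the coefficient of `x^n` in `∏_{i=0}^∞ (1 - x^{m^i})^{-k}`,
the number of `k`-colored `m`-ary partitions of `n`.  Here `(1 - X^{m^i})⁻¹` is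
realized as `PowerSeries.invOfUnit (1 - X ^ m ^ i) 1`, and since `m ≥ 2` the factors
with index `i > n` do not affect the coefficient of `x^n`. -/
noncomputable def Acoef (m k n : ℕ) : ℤ :=
  PowerSeries.coeff (R := ℤ) n
    (∏ i ∈ Finset.range (n + 1),
      (PowerSeries.invOfUnit (1 - PowerSeries.X ^ m ^ i) 1) ^ k)


/-- truncated polynomial product -/
noncomputable def Qaux (p r m : ℕ) : Polynomial ℤ :=
  ∏ i ∈ Finset.range m, (1 - Polynomial.X ^ p ^ i) ^ r

/-- the RHS of the theorem -/
noncomputable def Raux (p r n : ℕ) : ℤ :=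
  ∏ i ∈ Finset.range p, (-1 : ℤ) ^ (i * Np p i n) * (r.choose i : ℤ) ^ Np p i n

lemma coeff_one_sub_X_pow (r d : ℕ) :
    ((1 - Polynomial.X : Polynomial ℤ) ^ r).coeff d = (-1) ^ d * (r.choose d : ℤ) := by
  induction r generalizing d with
  | zero =>
    rcases d with _ | d
    · simp
    · simp [Nat.choose_eq_zero_of_lt, Polynomial.coeff_one]
  | succ r ih =>
    have h : ((1 - Polynomial.X : Polynomial ℤ) ^ (r + 1))
        = (1 - Polynomial.X) ^ r - (1 - Polynomial.X) ^ r * Polynomial.X := by ring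
    rw [h]
    rcases d with _ | d
    · simp [ih]
    · rw [Polynomial.coeff_sub, Polynomial.coeff_mul_X, ih, ih, Nat.choose_succ_succ]
      push_cast
      ring

lemma coeff_expand_mul {p : ℕ} (hp : 0 < p) (f g : Polynomial ℤ)
    (hg : ∀ d, p ≤ d → g.coeff d = 0) (n : ℕ) :
    ((Polynomial.expand ℤ p f) * g).coeff n = f.coeff (n / p) * g.coeff (n % p) := by
  rw [Polynomial.coeff_mul]
  rw [Finset.sum_eq_single (p * (n / p), n % p)]
  · rw [Polynomial.coeff_expand hp, if_pos (Dvd.intro _ rfl),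
      Nat.mul_div_cancel_left _ hp]
  · rintro ⟨a, b⟩ hab hne
    rw [Finset.HasAntidiagonal.mem_antidiagonal] at hab
    by_cases hb : p ≤ b
    · rw [hg b hb, mul_zero]
    · push_neg at hb
      rw [Polynomial.coeff_expand hp, if_neg, zero_mul]
      rintro ⟨c, rfl⟩
      apply hne
      have h1 : n % p = b := by rw [← hab, Nat.mul_add_mod, Nat.mod_eq_of_lt hb]
      have h2 : n / p = c := by rw [← hab, Nat.mul_add_div hp, Nat.div_eq_of_lt hb, add_zero]
      rw [h1, h2]
  · intro h
    exact absurd (Finset.HasAntidiagonal.mem_antidiagonal.mpr (Nat.div_add_mod n p)) h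

lemma Qaux_succ (p r m : ℕ) :
    Qaux p r (m + 1) = (Polynomial.expand ℤ p (Qaux p r m)) * (1 - Polynomial.X) ^ r := by
  rw [Qaux, Finset.prod_range_succ']
  congr 1
  · rw [Qaux, map_prod]
    refine Finset.prod_congr rfl fun i _ => ?_
    rw [map_pow, map_sub, map_one, map_pow, Polynomial.expand_X, ← pow_mul, pow_succ,
      mul_comm (p ^ i) p, pow_mul]
  · simp

lemma Raux_zero (p r : ℕ) : Raux p r 0 = 1 := by
  simp [Raux, Np]

lemma Raux_rec {p : ℕ} (r : ℕ) (hp : 2 ≤ p) {n : ℕ} (hn : 0 < n) :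
    Raux p r n = ((-1) ^ (n % p) * (r.choose (n % p) : ℤ)) * Raux p r (n / p) := by
  have hd : Nat.digits p n = n % p :: Nat.digits p (n / p) := Nat.digits_def' hp hn
  have hNp : ∀ i, Np p i n = Np p i (n / p) + (if n % p = i then 1 else 0) := by
    intro i
    rw [Np, hd, List.count_cons, Np]
    simp [beq_iff_eq]
  have step : Raux p r n
      = Raux p r (n / p) * ∏ i ∈ Finset.range p,
          (if n % p = i then (-1 : ℤ) ^ i * (r.choose i : ℤ) else 1) := by
    rw [Raux, Raux, ← Finset.prod_mul_distrib]
    refine Finset.prod_congr rfl fun i _ => ?_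
    rw [hNp i]
    split_ifs with h
    · subst h
      ring
    · ring
  rw [step, Finset.prod_ite_eq, if_pos (Finset.mem_range.mpr (Nat.mod_lt n (by omega)))]
  ring

lemma main_aux (p r : ℕ) (hp : 2 ≤ p) (hr2 : r ≤ p - 1) :
    ∀ m n, n < p ^ m → (Qaux p r m).coeff n = Raux p r n := by
  intro m
  induction m with
  | zero =>
    intro n hn
    rw [pow_zero] at hn
    obtain rfl : n = 0 := by omega
    simp [Qaux, Raux_zero]
  | succ m ih =>
    intro n hn
    have hp0 : 0 < p := by omega
    have hg : ∀ d, p ≤ d → ((1 - Polynomial.X : Polynomial ℤ) ^ r).coeff d = 0 := by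
      intro d hd
      rw [coeff_one_sub_X_pow, Nat.choose_eq_zero_of_lt (by omega)]
      simp
    have hdiv : n / p < p ^ m := by
      rw [Nat.div_lt_iff_lt_mul hp0]
      rw [pow_succ] at hn
      exact hn
    rw [Qaux_succ, coeff_expand_mul hp0 _ _ hg, coeff_one_sub_X_pow, ih _ hdiv]
    rcases Nat.eq_zero_or_pos n with rfl | hn0
    · simp [Raux_zero]
    · rw [Raux_rec r hp hn0]
      ring

lemma Dcoef_eq_Qaux (p r n : ℕ) : Dcoef p r n = (Qaux p r (n + 1)).coeff n := by
  rw [Dcoef, ← Polynomial.coeff_coe]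
  congr 1
  rw [Qaux, ← Polynomial.coeToPowerSeries.ringHom_apply, map_prod]
  refine Finset.prod_congr rfl fun i _ => ?_
  rw [map_pow, map_sub, map_one, map_pow, Polynomial.coeToPowerSeries.ringHom_apply,
    Polynomial.coe_X]

theorem stmt0 (p r : ℕ) (hp : 2 ≤ p) (hr1 : 1 ≤ r) (hr2 : r ≤ p - 1) (n : ℕ) :
    Dcoef p r n =
      ∏ i ∈ Finset.range p, (-1 : ℤ) ^ (i * Np p i n) * (r.choose i : ℤ) ^ Np p i n := by
  have hn : n < p ^ (n + 1) := by
    calc n < 2 ^ n := Nat.lt_two_pow_self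
    _ ≤ 2 ^ (n + 1) := Nat.pow_le_pow_right (by omega) (by omega)
    _ ≤ p ^ (n + 1) := Nat.pow_le_pow_left hp _
  rw [Dcoef_eq_Qaux, main_aux p r hp hr2 _ _ hn, Raux]
end

section
/- Let p ≥ 3 be a prime and k ∈ ℕ₊ with (p−1) | k. Then the congruence of formal power series F_p(x)^k ≡ (1 − x)^{k/(p−1)} (mod p^{ν_p(k)+1}) holds, i.e., every coefficient of F_p(x)^k − (1 − x)^{k/(p−1)} is divisible by p^{ν_p(k)+1}. -/
open PowerSeries Finset

lemma charP_powerSeries (R : Type*) [CommSemiring R] (p : ℕ) [CharP R p] :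
    CharP (PowerSeries R) p := by
  constructor
  intro m
  rw [← map_natCast (PowerSeries.C (R := R)) m, map_eq_zero_iff _ PowerSeries.C_injective,
    CharP.cast_eq_zero_iff R p m]

lemma telescope (p : ℕ) (hp : p.Prime) (n : ℕ) :
    (∏ i ∈ Finset.range (n + 1),
        ((1 : PowerSeries (ZMod p)) - PowerSeries.X ^ p ^ i) ^ (p - 1)) *
      (1 - PowerSeries.X) = 1 - PowerSeries.X ^ p ^ (n + 1) := by
  haveI : Fact p.Prime := ⟨hp⟩
  haveI : CharP (PowerSeries (ZMod p)) p := charP_powerSeries _ p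
  have step : ∀ m : ℕ, ((1 : PowerSeries (ZMod p)) - PowerSeries.X ^ m) ^ (p - 1) *
      (1 - PowerSeries.X ^ m) = 1 - PowerSeries.X ^ (m * p) := by
    intro m
    rw [← pow_succ, Nat.sub_add_cancel hp.one_lt.le, sub_pow_char, one_pow, ← pow_mul]
  induction n with
  | zero => simpa using step 1
  | succ n ih =>
      rw [Finset.prod_range_succ, mul_right_comm, ih, mul_comm, step, ← pow_succ]

lemma val_bound (p s j : ℕ) (hp : p.Prime) (hs : 1 ≤ s) (hj1 : 1 ≤ j) (hjs : j ≤ s) :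
    padicValNat p s + 1 ≤ j + padicValNat p (s.choose j) := by
  haveI : Fact p.Prime := ⟨hp⟩
  obtain ⟨a, rfl⟩ : ∃ a, s = a + 1 := ⟨s - 1, by omega⟩
  obtain ⟨b, rfl⟩ : ∃ b, j = b + 1 := ⟨j - 1, by omega⟩
  have hba : b ≤ a := by omega
  have hid := Nat.add_one_mul_choose_eq a b
  have h1 : padicValNat p ((a+1) * a.choose b) = padicValNat p ((a+1).choose (b+1) * (b+1)) := by
    rw [hid]
  rw [padicValNat.mul (by omega) (Nat.choose_pos hba).ne',
    padicValNat.mul (Nat.choose_pos (by omega)).ne' (by omega)] at h1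
  have h2 : padicValNat p (b+1) + 1 ≤ b + 1 := by
    have hd := Nat.le_of_dvd (by omega) (pow_padicValNat_dvd (p := p) (n := b + 1))
    have h2' : padicValNat p (b+1) < 2 ^ padicValNat p (b+1) := Nat.lt_two_pow_self
    have h3 : (2:ℕ) ^ padicValNat p (b+1) ≤ p ^ padicValNat p (b+1) :=
      Nat.pow_le_pow_left hp.two_le _
    omega
  omega

lemma dvd_coeff_mul (c : ℤ) (A B : PowerSeries ℤ) (n : ℕ)
    (h : ∀ m, m ≤ n → c ∣ PowerSeries.coeff (R := ℤ) m A) :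
    c ∣ PowerSeries.coeff (R := ℤ) n (B * A) := by
  rw [PowerSeries.coeff_mul]
  refine Finset.dvd_sum fun x hx => ?_
  rw [HasAntidiagonal.mem_antidiagonal] at hx
  exact Dvd.dvd.mul_left (h x.2 (by omega)) _

theorem stmt2 (p k : ℕ) (hp : p.Prime) (hp3 : 3 ≤ p) (hk : 1 ≤ k)
    (hdvd : (p - 1) ∣ k) (n : ℕ) :
    (p : ℤ) ^ (padicValNat p k + 1) ∣
      Acoef p k n -
        PowerSeries.coeff (R := ℤ) n ((1 - PowerSeries.X : PowerSeries ℤ) ^ (k / (p - 1))) := by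
  haveI : Fact p.Prime := ⟨hp⟩
  set s := k / (p - 1) with hs_def
  set v := padicValNat p k with hv_def
  have hks : (p - 1) * s = k := Nat.mul_div_cancel' hdvd
  have hs1 : 1 ≤ s := by
    rcases Nat.eq_zero_or_pos s with h | h
    · rw [h, Nat.mul_zero] at hks; omega
    · exact h
  -- notation
  set g : ℕ → PowerSeries ℤ := fun i => 1 - PowerSeries.X ^ p ^ i with hg_def
  set G : PowerSeries ℤ := ∏ i ∈ Finset.range (n + 1), g i with hG_def
  set P : PowerSeries ℤ := ∏ i ∈ Finset.range (n + 1),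
      (PowerSeries.invOfUnit (g i) 1) ^ k with hP_def
  have hcc : ∀ i, PowerSeries.constantCoeff (R := ℤ) (g i) = ((1 : ℤˣ) : ℤ) := by
    intro i
    have h1 : (PowerSeries.constantCoeff (R := ℤ)) (PowerSeries.X ^ p ^ i : PowerSeries ℤ) = 0 := by
      rw [map_pow, PowerSeries.constantCoeff_X, zero_pow (pow_ne_zero i (by omega : p ≠ 0))]
    simp [hg_def, h1]
  have hPG : P * G ^ k = 1 := by
    rw [hP_def, hG_def, ← Finset.prod_pow, ← Finset.prod_mul_distrib]
    refine Finset.prod_eq_one fun i _ => ?_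
    rw [← mul_pow, mul_comm, PowerSeries.mul_invOfUnit _ _ (hcc i), one_pow]
  set Q : PowerSeries ℤ := G ^ (p - 1) * (1 - PowerSeries.X) with hQ_def
  -- mod p : Q ≡ 1 - X^{p^{n+1}}
  have hQmod : ∀ m, (p : ℤ) ∣ PowerSeries.coeff (R := ℤ) m
      (Q - (1 - PowerSeries.X ^ p ^ (n + 1))) := by
    intro m
    have hmap : PowerSeries.map (Int.castRingHom (ZMod p))
        (Q - (1 - PowerSeries.X ^ p ^ (n + 1))) = 0 := by
      rw [hQ_def, hG_def, map_sub, sub_eq_zero]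
      simp only [hg_def, map_mul, map_pow, map_one, PowerSeries.map_X, map_sub, map_prod]
      rw [← Finset.prod_pow]
      exact telescope p hp n
    have h2 := congrArg (PowerSeries.coeff (R := ZMod p) m) hmap
    rw [PowerSeries.coeff_map, map_zero] at h2
    exact (ZMod.intCast_zmod_eq_zero_iff_dvd _ p).1 h2
  set A : PowerSeries ℤ := PowerSeries.mk
      (fun m => PowerSeries.coeff (R := ℤ) m (Q - (1 - PowerSeries.X ^ p ^ (n + 1))) / p) with hA_def
  have hQA : Q - (1 - PowerSeries.X ^ p ^ (n + 1)) = PowerSeries.C (R := ℤ) (p : ℤ) * A := by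
    ext m
    rw [PowerSeries.coeff_C_mul, hA_def, PowerSeries.coeff_mk]
    exact (Int.mul_ediv_cancel' (hQmod m)).symm
  set B : PowerSeries ℤ := Q - 1 with hB_def
  have hCAB : PowerSeries.C (R := ℤ) (p : ℤ) * A - B = PowerSeries.X ^ p ^ (n + 1) := by
    rw [hB_def]; linear_combination -hQA
  -- key coefficient divisibility
  have hBj : ∀ j m : ℕ, 1 ≤ j → j ≤ s → m ≤ n →
      (p : ℤ) ^ (v + 1) ∣ (s.choose j : ℤ) * PowerSeries.coeff (R := ℤ) m (B ^ j) := by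
    intro j m hj1 hjs hm
    have hmlt : m < p ^ (n + 1) := by
      calc m ≤ n := hm
        _ < 2 ^ (n + 1) := by have := Nat.lt_two_pow_self (n := n); omega
        _ ≤ p ^ (n + 1) := Nat.pow_le_pow_left (by omega) _
    have hdvdX : (PowerSeries.X : PowerSeries ℤ) ^ p ^ (n + 1) ∣
        (PowerSeries.C (R := ℤ) (p : ℤ) * A) ^ j - B ^ j := by
      have h := sub_dvd_pow_sub_pow (PowerSeries.C (R := ℤ) (p : ℤ) * A) B j
      rwa [hCAB] at h
    have h0 : PowerSeries.coeff (R := ℤ) m ((PowerSeries.C (R := ℤ) (p : ℤ) * A) ^ j - B ^ j) = 0 :=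
      PowerSeries.X_pow_dvd_iff.mp hdvdX m hmlt
    rw [map_sub, sub_eq_zero] at h0
    have e1 : PowerSeries.coeff (R := ℤ) m (B ^ j) = (p : ℤ) ^ j * PowerSeries.coeff (R := ℤ) m (A ^ j) := by
      rw [← h0, mul_pow, ← map_pow, PowerSeries.coeff_C_mul]
    rw [e1, ← mul_assoc]
    refine Dvd.dvd.mul_right ?_ _
    -- ℕ-level divisibility
    have hvk : v = padicValNat p s := by
      rw [hv_def, ← hks, padicValNat.mul (by omega) (by omega),
        padicValNat.eq_zero_of_not_dvd, zero_add]
      intro h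
      have := Nat.le_of_dvd (by omega) h
      omega
    have hnat : p ^ (v + 1) ∣ s.choose j * p ^ j := by
      have h1 : p ^ padicValNat p (s.choose j) ∣ s.choose j := pow_padicValNat_dvd
      have h2 := val_bound p s j hp hs1 hj1 hjs
      calc p ^ (v + 1) ∣ p ^ (padicValNat p (s.choose j) + j) :=
            pow_dvd_pow p (by rw [hvk]; omega)
        _ ∣ s.choose j * p ^ j := by
            rw [pow_add]; exact mul_dvd_mul h1 dvd_rfl
    have := Int.natCast_dvd_natCast.mpr hnat
    push_cast at this
    exact this
  -- assemble
  have hQB : Q = B + 1 := by rw [hB_def]; ring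
  have hQs : Q ^ s = G ^ k * (1 - PowerSeries.X) ^ s := by
    rw [hQ_def, mul_pow, ← pow_mul, hks]
  have hPident : P - (1 - PowerSeries.X) ^ s = P * (1 - Q ^ s) := by
    rw [hQs, mul_sub, mul_one, ← mul_assoc, hPG, one_mul]
  have hgoal : (p : ℤ) ^ (v + 1) ∣ PowerSeries.coeff (R := ℤ) n (P - (1 - PowerSeries.X) ^ s) := by
    rw [hPident]
    refine dvd_coeff_mul _ _ _ _ fun m hm => ?_
    rw [hQB, add_pow, Finset.sum_range_succ']
    simp only [one_pow, mul_one, pow_zero, Nat.choose_zero_right, Nat.cast_one, one_mul]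
    rw [← sub_sub, sub_sub_cancel_left, map_neg, map_sum]
    refine dvd_neg.mpr (Finset.dvd_sum fun j hj => ?_)
    rw [Finset.mem_range] at hj
    rw [mul_comm, ← map_natCast (PowerSeries.C (R := ℤ)) (s.choose (j + 1)), PowerSeries.coeff_C_mul]
    exact hBj (j + 1) m (by omega) (by omega) hm
  have : Acoef p k n - PowerSeries.coeff (R := ℤ) n ((1 - PowerSeries.X : PowerSeries ℤ) ^ s)
      = PowerSeries.coeff (R := ℤ) n (P - (1 - PowerSeries.X) ^ s) := by
    rw [map_sub]; rfl
  rw [this]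
  exact hgoal
end

section
/- Let p ≥ 3 be a prime, u ∈ {1,…,p−1}, and let n ≥ p be of the form n = n''·p^{s+1} + k·p^s + j with n'' ∈ ℕ, k ∈ {1,…,p−1}, s ∈ ℕ₊ and j ∈ {0,…,p−1}. If j ≥ u, then ν_p( ∑_{i=0}^{u} (−1)^i · C(u,i) · D_p(n−i) ) = 1. -/
open PowerSeries Finset

def fco (p d : ℕ) : ℤ := (-1)^d * ((p-1).choose d : ℤ)

def cfun (p m : ℕ) : ℤ := ((Nat.digits p m).map (fco p)).prod

lemma fco_zero (p : ℕ) : fco p 0 = 1 := by simp [fco]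

lemma cfun_zero (p : ℕ) : cfun p 0 = 1 := by simp [cfun]

lemma cfun_step (p : ℕ) (hp : 2 ≤ p) (m : ℕ) :
    cfun p m = fco p (m % p) * cfun p (m / p) := by
  rcases Nat.eq_zero_or_pos m with rfl | hm
  · simp [cfun, fco_zero]
  · rw [cfun, Nat.digits_def' hp hm]
    simp [cfun]

lemma coeffA (q r a : ℕ) (hq : 0 < q) :
    PowerSeries.coeff (R := ℤ) a ((1 - X^q)^r) =
      if q ∣ a ∧ a / q ≤ r then (-1 : ℤ)^(a/q) * (r.choose (a/q) : ℤ) else 0 := by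
  rw [sub_eq_add_neg, add_comm, add_pow, map_sum]
  have hterm : ∀ t ∈ Finset.range (r+1),
      PowerSeries.coeff (R := ℤ) a ((-X^q : PowerSeries ℤ)^t * 1^(r-t) * (r.choose t : PowerSeries ℤ))
        = if a = q * t then (-1:ℤ)^t * (r.choose t : ℤ) else 0 := by
    intro t _
    rw [one_pow, mul_one, neg_pow, ← pow_mul,
      ← map_natCast (PowerSeries.C (R := ℤ)) (r.choose t),
      show ((-1 : PowerSeries ℤ)) = PowerSeries.C (R := ℤ) (-1) by simp,
      ← map_pow, mul_comm ((C (R := ℤ)) ((-1:ℤ) ^ t) * X ^ (q * t)), ← mul_assoc, ← map_mul,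
      PowerSeries.coeff_C_mul, PowerSeries.coeff_X_pow]
    simp [mul_ite, mul_comm]
  rw [Finset.sum_congr rfl hterm]
  by_cases h : q ∣ a ∧ a / q ≤ r
  · obtain ⟨⟨w, rfl⟩, hw⟩ := h
    rw [Nat.mul_div_cancel_left w hq] at hw ⊢
    rw [Finset.sum_eq_single w]
    · simp [hw, dvd_mul_right]
    · intro b _ hb
      rw [if_neg]
      intro hqb
      exact hb (Nat.eq_of_mul_eq_mul_left hq hqb.symm)
    · intro hw'
      exact absurd (Finset.mem_range.mpr (Nat.lt_succ_of_le hw)) hw'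
  · rw [if_neg h, Finset.sum_eq_zero]
    intro b hb
    rw [if_neg]
    rintro rfl
    rw [Nat.mul_div_cancel_left b hq] at h
    exact h ⟨Dvd.intro b rfl, Nat.lt_succ_iff.mp (Finset.mem_range.mp hb)⟩

lemma main_coeff (p : ℕ) (hp : 2 ≤ p) :
    ∀ N e m : ℕ, m < p ^ (N + e) →
      PowerSeries.coeff (R := ℤ) m (∏ i ∈ Finset.range N, (1 - X ^ (p ^ (i + e))) ^ (p - 1)) =
        if p ^ e ∣ m then cfun p (m / p ^ e) else 0 := by
  intro N
  induction N with
  | zero =>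
    intro e m hm
    rw [Finset.prod_range_zero, PowerSeries.coeff_one]
    by_cases h : p ^ e ∣ m
    · obtain ⟨w, rfl⟩ := h
      have hpe : 0 < p ^ e := Nat.pow_pos (by omega)
      have hw : w = 0 := by
        rcases Nat.eq_zero_or_pos w with rfl | hw
        · rfl
        · exfalso; rw [Nat.zero_add] at hm
          exact absurd hm (not_lt.mpr (Nat.le_mul_of_pos_right _ hw))
      subst hw
      simp [cfun_zero]
    · rw [if_neg h, if_neg]
      rintro rfl
      exact h (dvd_zero _)
  | succ N ih =>
    intro e m hm
    have hpe : 0 < p ^ e := Nat.pow_pos (by omega)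
    rw [Finset.prod_range_succ']
    have hshift : ∀ i ∈ Finset.range N, (1 - X ^ (p ^ (i + 1 + e)) : PowerSeries ℤ) ^ (p - 1)
        = (1 - X ^ (p ^ (i + (e + 1)))) ^ (p - 1) := by
      intro i _; rw [show i + 1 + e = i + (e + 1) by omega]
    rw [show (0:ℕ) + e = e by omega]
    rw [Finset.prod_congr rfl hshift, PowerSeries.coeff_mul]
    have hmlt : m < p ^ (N + (e + 1)) := by
      rw [show N + (e+1) = N + 1 + e by omega]; exact hm
    have hB : ∀ b ≤ m, PowerSeries.coeff (R := ℤ) b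
        (∏ i ∈ Finset.range N, (1 - X ^ (p ^ (i + (e + 1)))) ^ (p - 1)) =
        if p ^ (e + 1) ∣ b then cfun p (b / p ^ (e + 1)) else 0 :=
      fun b hb => ih (e + 1) b (lt_of_le_of_lt hb hmlt)
    have hA : ∀ a : ℕ, PowerSeries.coeff (R := ℤ) a ((1 - X ^ (p ^ e)) ^ (p - 1)) =
        if p ^ e ∣ a ∧ a / p ^ e ≤ p - 1 then
          (-1 : ℤ)^(a / p^e) * ((p-1).choose (a / p^e) : ℤ) else 0 :=
      fun a => coeffA (p ^ e) (p - 1) a hpe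
    by_cases h : p ^ e ∣ m
    · obtain ⟨m', rfl⟩ := h
      rw [if_pos (Dvd.intro m' rfl), Nat.mul_div_cancel_left m' hpe]
      have hsum : p ^ (e+1) * (m' / p) + p ^ e * (m' % p) = p ^ e * m' := by
        rw [pow_succ]
        calc p ^ e * p * (m' / p) + p ^ e * (m' % p)
            = p ^ e * (p * (m' / p) + m' % p) := by ring
          _ = p ^ e * m' := by rw [Nat.div_add_mod]
      rw [Finset.sum_eq_single (p ^ (e+1) * (m' / p), p ^ e * (m' % p))]
      · rw [hB _ (by
          rw [← hsum]; exact Nat.le_add_right _ _),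
          hA]
        have hle : p ^ e * (m' % p) / p ^ e ≤ p - 1 := by
          rw [Nat.mul_div_cancel_left _ hpe]
          have := Nat.mod_lt m' (show 0 < p by omega)
          omega
        rw [if_pos (Dvd.intro _ rfl), if_pos ⟨Dvd.intro _ rfl, hle⟩,
          Nat.mul_div_cancel_left _ (by positivity : (0:ℕ) < p ^ (e+1)),
          Nat.mul_div_cancel_left _ hpe]
        rw [cfun_step p hp m', fco, mul_comm]
      · rintro ⟨b, a⟩ hmem hne
        rw [Finset.HasAntidiagonal.mem_antidiagonal] at hmem
        rw [hB b (by omega), hA a]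
        by_cases h1 : p ^ (e+1) ∣ b
        · by_cases h2 : p ^ e ∣ a ∧ a / p ^ e ≤ p - 1
          · exfalso
            obtain ⟨w, rfl⟩ := h1
            obtain ⟨⟨t, rfl⟩, ht⟩ := h2
            rw [Nat.mul_div_cancel_left _ hpe] at ht
            have htp : t < p := by omega
            have hm' : m' = p * w + t := by
              apply Nat.eq_of_mul_eq_mul_left hpe
              rw [← hmem, pow_succ]; ring
            have h3 : m' % p = t := by
              rw [hm', Nat.mul_add_mod, Nat.mod_eq_of_lt htp]
            have h4 : m' / p = w := by
              rw [hm', Nat.mul_add_div (by omega : 0 < p), Nat.div_eq_of_lt htp, Nat.add_zero]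
            exact hne (by rw [h3, h4])
          · rw [if_neg h2, mul_zero]
        · rw [if_neg h1, zero_mul]
      · intro hnot
        exact absurd (Finset.HasAntidiagonal.mem_antidiagonal.mpr hsum) hnot
    · rw [if_neg h, Finset.sum_eq_zero]
      rintro ⟨b, a⟩ hmem
      rw [Finset.HasAntidiagonal.mem_antidiagonal] at hmem
      rw [hB b (by omega), hA a]
      by_cases h1 : p ^ (e+1) ∣ b
      · by_cases h2 : p ^ e ∣ a ∧ a / p ^ e ≤ p - 1
        · exfalso
          apply h
          rw [← hmem]
          exact dvd_add (dvd_trans (pow_dvd_pow p (by omega)) h1) h2.1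
        · rw [if_neg h2, mul_zero]
      · rw [if_neg h1, zero_mul]

lemma Dp_eq_cfun (p : ℕ) (hp : 2 ≤ p) (n : ℕ) : Dp p n = cfun p n := by
  have hlt : n < p ^ (n + 1 + 0) := by
    calc n < p ^ n := Nat.lt_pow_self (by omega)
    _ ≤ p ^ (n + 1 + 0) := Nat.pow_le_pow_right (by omega) (by omega)
  have h := main_coeff p hp (n+1) 0 n hlt
  simp only [pow_zero, Nat.add_zero, one_dvd, if_true, Nat.div_one] at h
  rw [Dp, Dcoef, ← h]

lemma cfun_shift (p : ℕ) (hp : 2 ≤ p) (a k : ℕ) :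
    ∀ s', cfun p (a * p ^ (s'+1) + k * p ^ s') = cfun p (a * p + k) := by
  intro s'
  induction s' with
  | zero => simp
  | succ s' ih =>
    have hm : a * p ^ (s'+2) + k * p ^ (s'+1) = p * (a * p ^ (s'+1) + k * p ^ s') := by ring
    rw [cfun_step p hp, hm, Nat.mul_mod_right, Nat.mul_div_cancel_left _ (by omega : 0 < p),
      fco_zero, one_mul, ih]

lemma cfun_digit (p : ℕ) (hp : 2 ≤ p) (a k s j₀ : ℕ) (hs : 1 ≤ s) (hj : j₀ < p) :
    cfun p (a * p ^ (s+1) + k * p ^ s + j₀) = fco p j₀ * cfun p (a * p + k) := by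
  obtain ⟨s', rfl⟩ : ∃ s', s = s' + 1 := ⟨s-1, by omega⟩
  have hm : a * p ^ (s'+1+1) + k * p ^ (s'+1) + j₀
      = p * (a * p ^ (s'+1) + k * p ^ s') + j₀ := by ring
  rw [cfun_step p hp, hm, Nat.mul_add_mod, Nat.mod_eq_of_lt hj,
    Nat.mul_add_div (by omega : 0 < p), Nat.div_eq_of_lt hj, Nat.add_zero, cfun_shift p hp a k s']

lemma choose_pred_not_dvd (p : ℕ) (hp : p.Prime) (d : ℕ) (hd : d ≤ p - 1) :
    ¬ (p ∣ (p-1).choose d) := by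
  intro h
  have h2 := Nat.choose_mul_factorial_mul_factorial hd
  have h3 : p ∣ (p-1).factorial := by
    rw [← h2]; exact (h.mul_right _).mul_right _
  have := (Nat.Prime.dvd_factorial hp).mp h3
  have := hp.two_le
  omega

lemma fco_not_dvd (p : ℕ) (hp : p.Prime) (d : ℕ) (hd : d < p) : ¬ ((p:ℤ) ∣ fco p d) := by
  intro h
  rw [fco] at h
  have h' : (p:ℤ) ∣ ((p-1).choose d : ℤ) := by
    rcases Nat.even_or_odd d with he | ho
    · rwa [he.neg_one_pow, one_mul] at h
    · rw [ho.neg_one_pow, neg_one_mul, dvd_neg] at h; exact h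
  exact choose_pred_not_dvd p hp d (by omega) (Int.natCast_dvd_natCast.mp h')

lemma cfun_not_dvd (p : ℕ) (hp : p.Prime) : ∀ m, ¬ ((p:ℤ) ∣ cfun p m) := by
  intro m
  induction m using Nat.strong_induction_on with
  | _ m ih =>
    intro h
    rcases Nat.eq_zero_or_pos m with rfl | hm
    · rw [cfun_zero] at h
      have := Int.le_of_dvd one_pos h
      have := hp.two_le
      omega
    · rw [cfun_step p hp.two_le] at h
      have hprime : Prime (p:ℤ) := Nat.prime_iff_prime_int.mp hp
      rcases hprime.dvd_mul.mp h with h1 | h2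
      · exact fco_not_dvd p hp _ (Nat.mod_lt m hp.pos) h1
      · exact ih (m / p) (Nat.div_lt_self hm hp.one_lt) h2

lemma not_sq_dvd_fact (p : ℕ) (hp : p.Prime) (n : ℕ) (hn : n < 2 * p) : ¬ p^2 ∣ n.factorial := by
  rcases Nat.eq_zero_or_pos n with rfl | hn0
  · simp only [Nat.factorial_zero]
    intro h
    have := Nat.le_of_dvd one_pos h
    nlinarith [hp.two_le]
  have hlog : Nat.log p n < 2 := Nat.log_lt_of_lt_pow (by omega)
    (by nlinarith [hp.two_le])
  rw [Nat.Prime.pow_dvd_factorial_iff hp hlog]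
  have h1 : ∑ i ∈ Finset.Ico 1 2, n / p ^ i = n / p := by simp
  rw [h1]
  have h2 : n / p < 2 := (Nat.div_lt_iff_lt_mul hp.pos).mpr (by omega)
  omega

theorem stmt5 (p u : ℕ) (hp : p.Prime) (hp3 : 3 ≤ p) (hu1 : 1 ≤ u) (hu2 : u ≤ p - 1)
    (n n'' k s j : ℕ) (hk1 : 1 ≤ k) (hk2 : k ≤ p - 1) (hs : 1 ≤ s) (hj : j ≤ p - 1)
    (hn : p ≤ n) (hform : n = n'' * p ^ (s + 1) + k * p ^ s + j) (hju : u ≤ j) :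
    emultiplicity (p : ℤ)
      (∑ i ∈ Finset.range (u + 1), (-1 : ℤ) ^ i * (u.choose i : ℤ) * Dp p (n - i)) = 1 := by
  have hp2 : 2 ≤ p := by omega
  set Cb := (u + (p-1)).choose j with hCb
  have hjle : j ≤ u + (p-1) := by omega
  have hfact := Nat.choose_mul_factorial_mul_factorial hjle
  have hnd_j : ¬ p ∣ j.factorial := fun h => by
    have := (Nat.Prime.dvd_factorial hp).mp h; omega
  have hnd_w : ¬ p ∣ (u + (p-1) - j).factorial := fun h => by
    have := (Nat.Prime.dvd_factorial hp).mp h; omega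
  have hpC : p ∣ Cb := by
    have h1 : p ∣ Cb * j.factorial * (u + (p-1) - j).factorial := by
      rw [hfact]; exact Nat.dvd_factorial hp.pos (by omega)
    rcases (Nat.Prime.dvd_mul hp).mp h1 with h2 | h2
    · rcases (Nat.Prime.dvd_mul hp).mp h2 with h3 | h3
      · exact h3
      · exact absurd h3 hnd_j
    · exact absurd h2 hnd_w
  have hp2C : ¬ p^2 ∣ Cb := by
    intro h
    apply not_sq_dvd_fact p hp (u + (p-1)) (by omega)
    rw [← hfact]
    exact (h.mul_right _).mul_right _
  obtain ⟨C', hC'⟩ := hpC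
  have hndC' : ¬ p ∣ C' := by
    intro h
    exact hp2C (by rw [hC', pow_two]; exact mul_dvd_mul_left p h)
  set K := cfun p (n'' * p + k) with hKdef
  have hK : ∀ i ∈ Finset.range (u+1), Dp p (n - i) = fco p (j - i) * K := by
    intro i hi
    have hi' : i ≤ u := Nat.lt_succ_iff.mp (Finset.mem_range.mp hi)
    have hij : i ≤ j := le_trans hi' hju
    have hni : n - i = n'' * p ^ (s+1) + k * p ^ s + (j - i) := by
      rw [hform, Nat.add_sub_assoc hij]
    rw [hni, Dp_eq_cfun p hp2, cfun_digit p hp2 n'' k s (j-i) hs (by omega)]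
  have hsplit : ∑ i ∈ Finset.range (u + 1), (-1 : ℤ) ^ i * (u.choose i : ℤ) * Dp p (n - i)
      = (∑ i ∈ Finset.range (u + 1), (-1 : ℤ) ^ i * (u.choose i : ℤ) * fco p (j - i)) * K := by
    rw [Finset.sum_mul]
    refine Finset.sum_congr rfl fun i hi => ?_
    rw [hK i hi]; ring
  have hinner : ∑ i ∈ Finset.range (u + 1), (-1 : ℤ) ^ i * (u.choose i : ℤ) * fco p (j - i)
      = (-1:ℤ)^j * (Cb : ℤ) := by
    have h1 : ∀ i ∈ Finset.range (u+1), (-1:ℤ)^i * (u.choose i : ℤ) * fco p (j-i)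
        = (-1:ℤ)^j * ((u.choose i * (p-1).choose (j-i) : ℕ) : ℤ) := by
      intro i hi
      have hij : i ≤ j := le_trans (Nat.lt_succ_iff.mp (Finset.mem_range.mp hi)) hju
      rw [fco, show (-1:ℤ)^j = (-1:ℤ)^i * (-1:ℤ)^(j-i) by
        rw [← pow_add]; congr 1; omega]
      push_cast
      ring
    rw [Finset.sum_congr rfl h1, ← Finset.mul_sum, ← Nat.cast_sum]
    congr 1
    have h2 : ∑ i ∈ Finset.range (u+1), u.choose i * (p-1).choose (j-i)
        = ∑ i ∈ Finset.range (j+1), u.choose i * (p-1).choose (j-i) := by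
      refine Finset.sum_subset (Finset.range_subset_range.mpr (by omega)) fun x _ hx => ?_
      have hux : u < x := by
        rcases Nat.lt_or_ge u x with h | h
        · exact h
        · exact absurd (Finset.mem_range.mpr (by omega)) hx
      rw [Nat.choose_eq_zero_of_lt hux, zero_mul]
    rw [h2, hCb, Nat.add_choose_eq, Finset.Nat.sum_antidiagonal_eq_sum_range_succ_mk]
  rw [hsplit, hinner, hC']
  have hfin : (-1:ℤ)^j * ((p * C' : ℕ) : ℤ) * K = (p:ℤ) * ((-1:ℤ)^j * (C' : ℤ) * K) := by
    push_cast; ring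
  rw [hfin]
  have hprime : Prime (p:ℤ) := Nat.prime_iff_prime_int.mp hp
  rw [show (1:ℕ∞) = ((1:ℕ) : ℕ∞) by simp, emultiplicity_eq_coe]
  constructor
  · rw [pow_one]; exact Dvd.intro _ rfl
  · intro hdvd
    have hp0 : (p:ℤ) ≠ 0 := by positivity
    have hT : (p:ℤ) ∣ (-1:ℤ)^j * (C' : ℤ) * K := by
      obtain ⟨c, hc⟩ := hdvd
      refine ⟨c, mul_left_cancel₀ hp0 ?_⟩
      rw [hc]; ring
    have hCK : (p:ℤ) ∣ (C' : ℤ) * K := by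
      rcases Nat.even_or_odd j with he | ho
      · rwa [he.neg_one_pow, one_mul] at hT
      · rw [ho.neg_one_pow, neg_one_mul, neg_mul, dvd_neg] at hT
        exact hT
    rcases hprime.dvd_mul.mp hCK with h1 | h1
    · exact hndC' (Int.natCast_dvd_natCast.mp h1)
    · exact cfun_not_dvd p hp _ h1
end

section
/- Let p ≥ 3 be a prime and u ∈ {2,…,p−1}. Then there exist j, k ∈ {0,…,p−1} with k ≠ 0 such that for every s ∈ ℕ₊ and every n'' ∈ ℕ, the integer n = n''·p^{s+1} + k·p^s + j satisfies ν_p( ∑_{i=0}^{u} (−1)^i · C(u,i) · D_p(n−i) ) ≥ 2. -/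
open PowerSeries Finset

namespace Stmt6Aux

noncomputable def P (p m : ℕ) : Polynomial ℤ :=
  ∏ i ∈ Finset.range m, (1 - Polynomial.X ^ p ^ i) ^ (p - 1)

def f (p d : ℕ) : ℤ := (-1) ^ d * ((p - 1).choose d : ℤ)

lemma f_zero (p : ℕ) : f p 0 = 1 := by simp [f]

lemma dp_eq (p n : ℕ) : Dp p n = (P p (n + 1)).coeff n := by
  rw [Dp, Dcoef, P, ← Polynomial.coeff_coe]
  congr 1
  rw [← Polynomial.coeToPowerSeries.ringHom_apply, map_prod]
  refine Finset.prod_congr rfl fun i _ => ?_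
  simp [Polynomial.coeToPowerSeries.ringHom_apply, Polynomial.coe_pow, Polynomial.coe_sub,
    Polynomial.coe_one, Polynomial.coe_X]

lemma coeff_one_sub_X_pow (N a : ℕ) :
    ((1 - (Polynomial.X : Polynomial ℤ)) ^ N).coeff a = (-1) ^ a * (N.choose a : ℤ) := by
  have h : (1 - (Polynomial.X : Polynomial ℤ)) = (-1) * (Polynomial.X + Polynomial.C (-1)) := by
    simp; ring
  rw [h, mul_pow, show ((-1 : Polynomial ℤ)) ^ N = Polynomial.C ((-1 : ℤ) ^ N) by simp,
    Polynomial.coeff_C_mul, Polynomial.coeff_X_add_C_pow]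
  by_cases ha : a ≤ N
  · have h2 : N + (N - a) = a + 2 * (N - a) := by omega
    rw [← mul_assoc, ← pow_add, h2, pow_add, pow_mul, neg_one_sq, one_pow, mul_one]
  · rw [Nat.choose_eq_zero_of_lt (by omega)]
    simp

lemma coeff_pow_small {q r b : ℕ} (hb : b < q) :
    ((1 - (Polynomial.X : Polynomial ℤ) ^ q) ^ r).coeff b = if b = 0 then 1 else 0 := by
  have hdvd : ((Polynomial.X : Polynomial ℤ) ^ q) ∣ (1 - Polynomial.X ^ q) ^ r - 1 := by
    have h1 : ((Polynomial.X : Polynomial ℤ) ^ q) ∣ ((1 - Polynomial.X ^ q) - 1) := ⟨-1, by ring⟩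
    calc ((Polynomial.X : Polynomial ℤ) ^ q) ∣ ((1 - Polynomial.X ^ q) - 1) := h1
      _ ∣ (1 - Polynomial.X ^ q) ^ r - 1 ^ r := sub_dvd_pow_sub_pow _ _ r
      _ = (1 - Polynomial.X ^ q) ^ r - 1 := by rw [one_pow]
  obtain ⟨h, hh⟩ := hdvd
  have hG : (1 - (Polynomial.X : Polynomial ℤ) ^ q) ^ r = 1 + h * Polynomial.X ^ q := by
    rw [mul_comm h]; linear_combination hh
  rw [hG, Polynomial.coeff_add, Polynomial.coeff_mul_X_pow', if_neg (by omega),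
    Polynomial.coeff_one]
  simp

lemma P_succ (p m : ℕ) : P p (m + 1) = (1 - Polynomial.X) ^ (p - 1) *
    Polynomial.expand ℤ p (P p m) := by
  have h1 : Polynomial.expand ℤ p (P p m) =
      ∏ i ∈ Finset.range m, (1 - Polynomial.X ^ p ^ (i + 1)) ^ (p - 1) := by
    rw [P, map_prod]
    refine Finset.prod_congr rfl fun i _ => ?_
    rw [map_pow, map_sub, map_one, map_pow, Polynomial.expand_X, ← pow_mul, ← pow_succ']
  rw [h1, P, Finset.prod_range_succ', pow_zero, pow_one, mul_comm]

lemma coeff_P_succ {p : ℕ} (hp2 : 2 ≤ p) (m n r : ℕ) (hr : r < p) :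
    (P p (m + 1)).coeff (p * n + r) = f p r * (P p m).coeff n := by
  rw [P_succ, Polynomial.coeff_mul]
  rw [Finset.sum_eq_single (r, p * n)]
  · rw [Polynomial.coeff_expand (by omega : 0 < p), if_pos (dvd_mul_right p n),
      Nat.mul_div_cancel_left _ (by omega : 0 < p), coeff_one_sub_X_pow, f]
  · rintro ⟨a, b⟩ hmem hne
    rw [Finset.HasAntidiagonal.mem_antidiagonal] at hmem
    rw [Polynomial.coeff_expand (by omega : 0 < p)]
    split_ifs with hdvd
    · obtain ⟨c, rfl⟩ := hdvd
      by_cases ha : a ≤ p - 1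
      · exfalso; apply hne
        have h1 : (a + p * c) % p = a := by
          rw [Nat.add_mul_mod_self_left, Nat.mod_eq_of_lt (by omega)]
        have h2 : (p * n + r) % p = r := by
          rw [Nat.mul_add_mod, Nat.mod_eq_of_lt hr]
        have har : a = r := by rw [← h1, hmem, h2]
        have hcn : c = n := by
          have : p * c = p * n := by omega
          exact Nat.eq_of_mul_eq_mul_left (by omega) this
        rw [har, hcn]
      · rw [coeff_one_sub_X_pow, Nat.choose_eq_zero_of_lt (by omega)]
        simp
    · simp
  · intro h
    exact absurd (by rw [Finset.HasAntidiagonal.mem_antidiagonal]; omega) h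

lemma coeff_P_stable {p : ℕ} (hp2 : 2 ≤ p) {n m : ℕ} (h : n + 1 ≤ m) :
    (P p m).coeff n = Dp p n := by
  rw [dp_eq]
  induction m, h using Nat.le_induction with
  | base => rfl
  | succ m hm ih =>
    rw [← ih, P, Finset.prod_range_succ, ← P, Polynomial.coeff_mul]
    rw [Finset.sum_eq_single (n, 0)]
    · have hq : (0 : ℕ) < p ^ m := by positivity
      rw [coeff_pow_small (by positivity)]
      simp
    · rintro ⟨a, b⟩ hmem hne
      rw [Finset.HasAntidiagonal.mem_antidiagonal] at hmem
      have hb : b ≠ 0 := by rintro rfl; exact hne (by simp; omega)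
      have hblt : b < p ^ m := by
        have h1 : m < 2 ^ m := Nat.lt_two_pow_self (n := m)
        have h2 : 2 ^ m ≤ p ^ m := Nat.pow_le_pow_left hp2 m
        omega
      rw [coeff_pow_small hblt, if_neg hb, mul_zero]
    · intro h
      exact absurd (by rw [Finset.HasAntidiagonal.mem_antidiagonal]; omega) h

lemma dp_rec {p : ℕ} (hp2 : 2 ≤ p) (n r : ℕ) (hr : r < p) :
    Dp p (p * n + r) = f p r * Dp p n := by
  by_cases h0 : p * n + r = 0
  · obtain ⟨hpn, hr0⟩ := Nat.add_eq_zero.mp h0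
    have hn : n = 0 := by
      rcases Nat.mul_eq_zero.mp hpn with h | h
      · omega
      · exact h
    rw [hn, hr0, f_zero]; simp
  · have hm : n + 1 ≤ p * n + r := by
      rcases Nat.eq_zero_or_pos n with rfl | hn
      · simp only [Nat.mul_zero, Nat.zero_add] at h0 ⊢
        omega
      · calc n + 1 ≤ 2 * n := by omega
          _ ≤ p * n := Nat.mul_le_mul_right n hp2
          _ ≤ p * n + r := Nat.le_add_right _ _
    calc Dp p (p * n + r) = (P p ((p * n + r) + 1)).coeff (p * n + r) := dp_eq p _
      _ = f p r * (P p (p * n + r)).coeff n := coeff_P_succ hp2 (p * n + r) n r hr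
      _ = f p r * Dp p n := by rw [coeff_P_stable hp2 hm]

lemma dp_high {p : ℕ} (hp2 : 2 ≤ p) {a : ℕ} (ha : a < p) :
    ∀ s n'' : ℕ, Dp p (n'' * p ^ (s + 1) + a * p ^ s) = f p a * Dp p n'' := by
  intro s
  induction s with
  | zero =>
    intro n''
    have harg : n'' * p ^ (0 + 1) + a * p ^ 0 = p * n'' + a := by simp [Nat.mul_comm]
    rw [harg, dp_rec hp2 _ _ ha]
  | succ s ih =>
    intro n''
    have harg : n'' * p ^ (s + 1 + 1) + a * p ^ (s + 1)
        = p * (n'' * p ^ (s + 1) + a * p ^ s) + 0 := by ring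
    rw [harg, dp_rec hp2 _ _ (by omega), ih n'', f_zero, one_mul]

lemma dp_digits2 {p : ℕ} (hp2 : 2 ≤ p) {a b : ℕ} (ha : a < p) (hb : b < p)
    (s : ℕ) (hs : 1 ≤ s) (n'' : ℕ) :
    Dp p (n'' * p ^ (s + 1) + a * p ^ s + b) = f p b * (f p a * Dp p n'') := by
  have hs' : s - 1 + 1 = s := by omega
  have harg : n'' * p ^ (s + 1) + a * p ^ s + b
      = p * (n'' * p ^ (s - 1 + 1 + 1 - 1) + a * p ^ (s - 1)) + b := by
    conv_lhs => rw [show s = s - 1 + 1 by omega]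
    simp only [show s - 1 + 1 + 1 - 1 = s - 1 + 1 from rfl]
    ring
  rw [harg, dp_rec hp2 _ _ hb]
  simp only [show s - 1 + 1 + 1 - 1 = s - 1 + 1 from rfl]
  rw [dp_high hp2 ha (s - 1) n'']

lemma dp_E {p : ℕ} (hp2 : 2 ≤ p) (hodd : p % 2 = 1) {a : ℕ} (ha : a < p) :
    ∀ s : ℕ, 1 ≤ s → ∀ n'' : ℕ,
      Dp p (n'' * p ^ s + a * p ^ (s - 1) + (p ^ (s - 1) - 1)) = f p a * Dp p n'' := by
  intro s hs
  induction s with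
  | zero => omega
  | succ s ih =>
    intro n''
    rcases Nat.eq_zero_or_pos s with rfl | hs1
    · have harg : n'' * p ^ (0 + 1) + a * p ^ (0 + 1 - 1) + (p ^ (0 + 1 - 1) - 1)
          = p * n'' + a := by simp [Nat.mul_comm]
      rw [harg, dp_rec hp2 _ _ ha]
    · have hq : 1 ≤ p ^ (s - 1) := Nat.one_le_pow _ _ (by omega)
      have hps : p ^ s = p * p ^ (s - 1) := by
        conv_lhs => rw [show s = (s - 1) + 1 by omega]
        rw [pow_succ]; ring
      have h3 : p ≤ p ^ s := by
        calc p = p * 1 := (mul_one p).symm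
        _ ≤ p * p ^ (s - 1) := Nat.mul_le_mul_left p hq
        _ = p ^ s := hps.symm
      have harg : n'' * p ^ (s + 1) + a * p ^ (s + 1 - 1) + (p ^ (s + 1 - 1) - 1)
          = p * (n'' * p ^ s + a * p ^ (s - 1) + (p ^ (s - 1) - 1)) + (p - 1) := by
        have h1 : p * (p ^ (s - 1) - 1) = p ^ s - p := by
          rw [Nat.mul_sub, ← hps]; ring_nf
        simp only [show s + 1 - 1 = s from rfl]
        have h4 : p * (a * p ^ (s - 1)) = a * p ^ s := by rw [hps]; ring
        have h5 : p * (n'' * p ^ s) = n'' * p ^ (s + 1) := by rw [pow_succ]; ring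
        rw [Nat.mul_add, Nat.mul_add, h1, h4, h5]
        omega
      have hlast : f p (p - 1) = 1 := by
        rw [f, Nat.choose_self]
        have h2 : (p - 1) % 2 = 0 := by omega
        rw [Nat.cast_one, mul_one, ← Nat.div_add_mod (p - 1) 2, h2, Nat.add_zero,
          pow_mul, neg_one_sq, one_pow]
      rw [harg, dp_rec hp2 _ _ (by omega), ih hs1 n'', hlast, one_mul]

lemma dp_borrow {p : ℕ} (hp2 : 2 ≤ p) (hodd : p % 2 = 1) {a t : ℕ} (ha : a < p)
    (ht1 : 1 ≤ t) (ht2 : t ≤ p - 1) (s : ℕ) (hs : 1 ≤ s) (n'' : ℕ) :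
    Dp p (n'' * p ^ (s + 1) + a * p ^ s + (p ^ s - t)) = f p (p - t) * (f p a * Dp p n'') := by
  have hq : 1 ≤ p ^ (s - 1) := Nat.one_le_pow _ _ (by omega)
  have hps : p ^ s = p * p ^ (s - 1) := by
    conv_lhs => rw [show s = (s - 1) + 1 by omega]
    rw [pow_succ]; ring
  have h3 : p ≤ p ^ s := by
    calc p = p * 1 := (mul_one p).symm
    _ ≤ p * p ^ (s - 1) := Nat.mul_le_mul_left p hq
    _ = p ^ s := hps.symm
  have harg : n'' * p ^ (s + 1) + a * p ^ s + (p ^ s - t)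
      = p * (n'' * p ^ s + a * p ^ (s - 1) + (p ^ (s - 1) - 1)) + (p - t) := by
    have h1 : p * (p ^ (s - 1) - 1) = p ^ s - p := by
      rw [Nat.mul_sub, ← hps]; ring_nf
    have h4 : p * (a * p ^ (s - 1)) = a * p ^ s := by rw [hps]; ring
    have h5 : p * (n'' * p ^ s) = n'' * p ^ (s + 1) := by rw [pow_succ]; ring
    rw [Nat.mul_add, Nat.mul_add, h1, h4, h5]
    omega
  rw [harg, dp_rec hp2 _ _ (by omega), dp_E hp2 hodd ha s hs n'']

lemma negpow (a b : ℕ) (h : a % 2 = b % 2) : (-1 : ℤ) ^ a = (-1) ^ b := by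
  rcases Nat.even_or_odd a with ha | ha
  · have hb : Even b := by rw [Nat.even_iff]; rw [Nat.even_iff] at ha; omega
    rw [ha.neg_one_pow, hb.neg_one_pow]
  · have hb : Odd b := by rw [Nat.odd_iff]; rw [Nat.odd_iff] at ha; omega
    rw [ha.neg_one_pow, hb.neg_one_pow]

lemma not_dvd_choose_pred {p : ℕ} (hp : p.Prime) : ∀ i, i ≤ p - 1 → ¬ p ∣ (p - 1).choose i := by
  intro i
  induction i with
  | zero =>
    intro _ h
    rw [Nat.choose_zero_right] at h
    have h1 := Nat.le_of_dvd one_pos h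
    have h2 := hp.two_le
    omega
  | succ i ih =>
    intro hi hdvd
    have hid := Nat.choose_succ_right_eq (p - 1) i
    have h2 : p ∣ (p - 1).choose i * (p - 1 - i) := by
      rw [← hid]; exact Dvd.dvd.mul_right hdvd _
    rcases (Nat.Prime.dvd_mul hp).mp h2 with h | h
    · exact ih (by omega) h
    · have hlb : 1 ≤ p - 1 - i := by omega
      have := Nat.le_of_dvd (by omega) h
      omega

lemma dichotomy {p : ℕ} (hp : p.Prime) (hp3 : 3 ≤ p) {m : ℕ} (hm1 : 1 ≤ m) (hm2 : m ≤ p - 2) :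
    ¬ (p : ℤ) ^ 2 ∣ ((p + m).choose p : ℤ) - ((p + m).choose 0 : ℤ) ∨
    ¬ (p : ℤ) ^ 2 ∣ ((p + m).choose (p + 1) : ℤ) - ((p + m).choose 1 : ℤ) := by
  by_contra hcon
  push_neg at hcon
  obtain ⟨⟨x, hx⟩, ⟨y, hy⟩⟩ := hcon
  rw [Nat.choose_zero_right] at hx
  rw [Nat.choose_one_right] at hy
  have hid := Nat.choose_succ_right_eq (p + m) p
  have hsub : p + m - p = m := by omega
  rw [hsub] at hid
  have hidz : ((p + m).choose (p + 1) : ℤ) * ((p : ℤ) + 1) = ((p + m).choose p : ℤ) * m := by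
    exact_mod_cast congrArg (fun x : ℕ => (x : ℤ)) hid
  have hxz : ((p + m).choose p : ℤ) = 1 + (p : ℤ) ^ 2 * x := by push_cast at hx ⊢; linarith
  have hyz : ((p + m).choose (p + 1) : ℤ) = ((p : ℤ) + m) + (p : ℤ) ^ 2 * y := by
    push_cast at hy ⊢; linarith
  have hkey : (p : ℤ) * ((m : ℤ) + 1) = (p : ℤ) * ((p : ℤ) * (x * m - y * ((p : ℤ) + 1) - 1)) := by
    linear_combination (m : ℤ) * hxz - ((p : ℤ) + 1) * hyz + hidz
  have hpne : (p : ℤ) ≠ 0 := by exact_mod_cast hp.pos.ne'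
  have hdvd : (p : ℤ) ∣ (m : ℤ) + 1 :=
    ⟨_, mul_left_cancel₀ hpne hkey⟩
  have hdvdn : p ∣ m + 1 := by exact_mod_cast hdvd
  have := Nat.le_of_dvd (by omega) hdvdn
  omega

lemma solve {p : ℕ} (hp : p.Prime) (A B : ℤ) (hA : ¬ (p : ℤ) ∣ A)
    (h1 : (p : ℤ) ∣ B - A) (h2 : ¬ (p : ℤ) ^ 2 ∣ B - A) :
    ∃ k : ℕ, 1 ≤ k ∧ k ≤ p - 1 ∧
      (p : ℤ) ^ 2 ∣ ((p - 1).choose k : ℤ) * A + ((p - 1).choose (k - 1) : ℤ) * B := by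
  haveI := Fact.mk hp
  obtain ⟨D, hD⟩ := h1
  have hDp : ¬ (p : ℤ) ∣ D := by
    rintro ⟨e, he⟩
    exact h2 ⟨e, by rw [hD, he]; ring⟩
  have hDne : ((D : ℤ) : ZMod p) ≠ 0 := by
    rwa [Ne, ZMod.intCast_zmod_eq_zero_iff_dvd]
  have hAne : ((A : ℤ) : ZMod p) ≠ 0 := by
    rwa [Ne, ZMod.intCast_zmod_eq_zero_iff_dvd]
  set c : ZMod p := -(A : ZMod p) * ((D : ZMod p))⁻¹ with hc
  have hcne : c ≠ 0 := mul_ne_zero (neg_ne_zero.mpr hAne) (inv_ne_zero hDne)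
  set k : ℕ := c.val with hkdef
  have hkval : ((k : ℕ) : ZMod p) = c := ZMod.natCast_rightInverse c
  have hklt : k < p := ZMod.val_lt c
  have hkne : k ≠ 0 := fun h => hcne (by rwa [h, Nat.cast_zero, eq_comm] at hkval)
  refine ⟨k, by omega, by omega, ?_⟩
  have hkp : (p : ℤ) ∣ A + (k : ℤ) * D := by
    rw [← ZMod.intCast_zmod_eq_zero_iff_dvd]
    push_cast
    rw [hkval, hc, mul_assoc, inv_mul_cancel₀ hDne, mul_one]
    ring
  obtain ⟨w, hw⟩ := hkp
  have key1 : (p : ℤ) ^ 2 ∣ (p : ℤ) * A + (k : ℤ) * (B - A) :=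
    ⟨w, by rw [hD]; linear_combination (p : ℤ) * hw⟩
  have hcc : ((p - 1).choose k : ℤ) * k = ((p - 1).choose (k - 1) : ℤ) * ((p : ℤ) - k) := by
    have hid := Nat.choose_succ_right_eq (p - 1) (k - 1)
    rw [show k - 1 + 1 = k by omega] at hid
    have hsub : p - 1 - (k - 1) = p - k := by omega
    rw [hsub] at hid
    have : (((p - 1).choose k : ℕ) : ℤ) * ((k : ℕ) : ℤ)
        = (((p - 1).choose (k - 1) : ℕ) : ℤ) * (((p - k : ℕ)) : ℤ) := by
      exact_mod_cast congrArg (fun x : ℕ => (x : ℤ)) hid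
    rwa [Nat.cast_sub (by omega : k ≤ p)] at this
  have hfin : (p : ℤ) ^ 2 ∣ (k : ℤ) * (((p - 1).choose k : ℤ) * A + ((p - 1).choose (k - 1) : ℤ) * B) := by
    have heq : (k : ℤ) * (((p - 1).choose k : ℤ) * A + ((p - 1).choose (k - 1) : ℤ) * B)
        = ((p - 1).choose (k - 1) : ℤ) * ((p : ℤ) * A + (k : ℤ) * (B - A)) := by
      linear_combination A * hcc
    rw [heq]
    exact Dvd.dvd.mul_left key1 _
  have hpz : Prime (p : ℤ) := Nat.prime_iff_prime_int.mp hp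
  have hpk : ¬ (p : ℤ) ∣ (k : ℤ) := by
    rw [Int.natCast_dvd_natCast]
    intro h
    have := Nat.le_of_dvd (by omega) h
    omega
  exact hpz.pow_dvd_of_dvd_mul_left 2 hpk hfin

lemma key {p : ℕ} (hp : p.Prime) (hp3 : 3 ≤ p) {m : ℕ} (hm1 : 1 ≤ m) (hm2 : m ≤ p - 2) :
    ∃ j k : ℕ, j ≤ 1 ∧ 1 ≤ k ∧ k ≤ p - 1 ∧
      (p : ℤ) ^ 2 ∣ ((p - 1).choose k : ℤ) * ((p + m).choose j : ℤ)
        + ((p - 1).choose (k - 1) : ℤ) * ((p + m).choose (p + j) : ℤ) := by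
  haveI := Fact.mk hp
  have hmodp : ((p + m).choose p : ℕ) ≡ 1 [MOD p] := by
    have h := Choose.choose_modEq_choose_mod_mul_choose_div_nat (n := p + m) (k := p) (p := p)
    have e1 : (p + m) % p = m := by rw [Nat.add_mod_left, Nat.mod_eq_of_lt (by omega)]
    have e2 : (p + m) / p = 1 := Nat.div_eq_of_lt_le (by omega) (by omega)
    have e3 : p % p = 0 := Nat.mod_self p
    have e4 : p / p = 1 := Nat.div_self (by omega)
    rw [e1, e2, e3, e4] at h
    simpa using h
  have hmodp1 : ((p + m).choose (p + 1) : ℕ) ≡ m [MOD p] := by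
    have h := Choose.choose_modEq_choose_mod_mul_choose_div_nat (n := p + m) (k := p + 1) (p := p)
    have e1 : (p + m) % p = m := by rw [Nat.add_mod_left, Nat.mod_eq_of_lt (by omega)]
    have e2 : (p + m) / p = 1 := Nat.div_eq_of_lt_le (by omega) (by omega)
    have e3 : (p + 1) % p = 1 := by rw [Nat.add_mod_left, Nat.mod_eq_of_lt (by omega)]
    have e4 : (p + 1) / p = 1 := Nat.div_eq_of_lt_le (by omega) (by omega)
    rw [e1, e2, e3, e4] at h
    simpa using h
  have hd1 : (p : ℤ) ∣ ((p + m).choose p : ℤ) - ((p + m).choose 0 : ℤ) := by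
    rw [Nat.choose_zero_right, Nat.cast_one]
    exact_mod_cast (Nat.modEq_iff_dvd (n := p)).mp hmodp.symm
  have hd2 : (p : ℤ) ∣ ((p + m).choose (p + 1) : ℤ) - ((p + m).choose 1 : ℤ) := by
    rw [Nat.choose_one_right]
    have h := (Nat.modEq_iff_dvd (n := p)).mp hmodp1.symm
    push_cast at h ⊢
    obtain ⟨w, hw⟩ := h
    exact ⟨w - 1, by push_cast; linarith⟩
  rcases dichotomy hp hp3 hm1 hm2 with hcase | hcase
  · have hA : ¬ (p : ℤ) ∣ ((p + m).choose 0 : ℤ) := by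
      rw [Nat.choose_zero_right, Nat.cast_one]
      intro h
      have := Int.le_of_dvd one_pos h
      have : (3 : ℤ) ≤ p := by exact_mod_cast hp3
      omega
    obtain ⟨k, hk1, hk2, hk3⟩ := solve hp _ _ hA hd1 hcase
    exact ⟨0, k, by omega, hk1, hk2, by simpa using hk3⟩
  · have hA : ¬ (p : ℤ) ∣ ((p + m).choose 1 : ℤ) := by
      rw [Nat.choose_one_right]
      intro h
      have h2 : (p : ℤ) ∣ (m : ℤ) := (dvd_add_right ⟨1, by push_cast; ring⟩).mp (by push_cast at h ⊢; exact h)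
      have h3 : p ∣ m := by exact_mod_cast h2
      have := Nat.le_of_dvd (by omega) h3
      omega
    obtain ⟨k, hk1, hk2, hk3⟩ := solve hp _ _ hA hd2 hcase
    exact ⟨1, k, by omega, hk1, hk2, by simpa using hk3⟩

lemma vand (u p j : ℕ) :
    ∑ i ∈ Finset.range (j + 1), u.choose i * (p - 1).choose (j - i)
      = (u + (p - 1)).choose j := by
  rw [Nat.add_choose_eq, Finset.Nat.sum_antidiagonal_eq_sum_range_succ_mk]

lemma vand2 {u p : ℕ} (hp1 : 1 ≤ p) (hu : u ≤ p - 1) (j : ℕ) :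
    ∑ i ∈ Finset.Ico (j + 1) (u + 1), u.choose i * (p - 1).choose (p + j - i)
      = (u + (p - 1)).choose (p + j) := by
  rw [Nat.add_choose_eq, Finset.Nat.sum_antidiagonal_eq_sum_range_succ_mk]
  apply Finset.sum_subset
  · intro x hx
    rw [Finset.mem_Ico] at hx
    rw [Finset.mem_range]
    omega
  · intro x hx hnx
    rw [Finset.mem_range] at hx
    rw [Finset.mem_Ico] at hnx
    push_neg at hnx
    rcases Nat.lt_or_ge x (j + 1) with h | h
    · rw [Nat.choose_eq_zero_of_lt (show p - 1 < p + j - x by omega), Nat.mul_zero]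
    · have hxu : u < x := by omega
      rw [Nat.choose_eq_zero_of_lt hxu, Nat.zero_mul]

end Stmt6Aux


theorem stmt6 (p u : ℕ) (hp : p.Prime) (hp3 : 3 ≤ p) (hu1 : 2 ≤ u) (hu2 : u ≤ p - 1) :
    ∃ j k : ℕ, j ≤ p - 1 ∧ k ≤ p - 1 ∧ k ≠ 0 ∧
      ∀ s : ℕ, 1 ≤ s → ∀ n'' : ℕ,
        2 ≤ emultiplicity (p : ℤ)
          (∑ i ∈ Finset.range (u + 1), (-1 : ℤ) ^ i * (u.choose i : ℤ) *
            Dp p (n'' * p ^ (s + 1) + k * p ^ s + j - i)) := by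
  have hp2 : 2 ≤ p := hp.two_le
  have hodd : p % 2 = 1 := Nat.odd_iff.mp (hp.odd_of_ne_two (by omega))
  obtain ⟨j, k, hj1, hk1, hk2, hdvd⟩ :=
    Stmt6Aux.key hp hp3 (show 1 ≤ u - 1 by omega) (show u - 1 ≤ p - 2 by omega)
  refine ⟨j, k, by omega, hk2, by omega, ?_⟩
  intro s hs n''
  have hps : p ≤ p ^ s := Nat.le_self_pow (by omega) p
  have h1 : ∀ i ∈ Finset.range (j + 1),
      (-1 : ℤ) ^ i * (u.choose i : ℤ) * Dp p (n'' * p ^ (s + 1) + k * p ^ s + j - i)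
      = ((-1 : ℤ) ^ (j + k) * Dp p n'' * ((p - 1).choose k : ℤ))
        * ((u.choose i : ℤ) * ((p - 1).choose (j - i) : ℤ)) := by
    intro i hi
    rw [Finset.mem_range] at hi
    have harg : n'' * p ^ (s + 1) + k * p ^ s + j - i
        = n'' * p ^ (s + 1) + k * p ^ s + (j - i) := by omega
    rw [harg, Stmt6Aux.dp_digits2 hp2 (show k < p by omega) (show j - i < p by omega) s hs n'']
    simp only [Stmt6Aux.f]
    have hsign : (-1 : ℤ) ^ i * ((-1 : ℤ) ^ (j - i) * (-1 : ℤ) ^ k) = (-1 : ℤ) ^ (j + k) := by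
      rw [← pow_add, ← pow_add]
      exact Stmt6Aux.negpow _ _ (by omega)
    linear_combination ((u.choose i : ℤ) * ((p - 1).choose (j - i) : ℤ)
      * ((p - 1).choose k : ℤ) * Dp p n'') * hsign
  have h2 : ∀ i ∈ Finset.Ico (j + 1) (u + 1),
      (-1 : ℤ) ^ i * (u.choose i : ℤ) * Dp p (n'' * p ^ (s + 1) + k * p ^ s + j - i)
      = ((-1 : ℤ) ^ (j + k) * Dp p n'' * ((p - 1).choose (k - 1) : ℤ))
        * ((u.choose i : ℤ) * ((p - 1).choose (p + j - i) : ℤ)) := by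
    intro i hi
    rw [Finset.mem_Ico] at hi
    have hkq : k * p ^ s = (k - 1) * p ^ s + p ^ s := by
      conv_lhs => rw [show k = (k - 1) + 1 by omega]
      ring
    have harg : n'' * p ^ (s + 1) + k * p ^ s + j - i
        = n'' * p ^ (s + 1) + (k - 1) * p ^ s + (p ^ s - (i - j)) := by omega
    rw [harg, Stmt6Aux.dp_borrow hp2 hodd (show k - 1 < p by omega) (show 1 ≤ i - j by omega)
      (show i - j ≤ p - 1 by omega) s hs n'']
    rw [show p - (i - j) = p + j - i by omega]
    simp only [Stmt6Aux.f]
    have hsign : (-1 : ℤ) ^ i * ((-1 : ℤ) ^ (p + j - i) * (-1 : ℤ) ^ (k - 1))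
        = (-1 : ℤ) ^ (j + k) := by
      rw [← pow_add, ← pow_add]
      exact Stmt6Aux.negpow _ _ (by omega)
    linear_combination ((u.choose i : ℤ) * ((p - 1).choose (p + j - i) : ℤ)
      * ((p - 1).choose (k - 1) : ℤ) * Dp p n'') * hsign
  have hA : (∑ i ∈ Finset.range (j + 1), (u.choose i : ℤ) * ((p - 1).choose (j - i) : ℤ))
      = ((u + (p - 1)).choose j : ℤ) := by
    rw [← Stmt6Aux.vand u p j]
    push_cast
    rfl
  have hB : (∑ i ∈ Finset.Ico (j + 1) (u + 1),
      (u.choose i : ℤ) * ((p - 1).choose (p + j - i) : ℤ))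
      = ((u + (p - 1)).choose (p + j) : ℤ) := by
    rw [← Stmt6Aux.vand2 (show 1 ≤ p by omega) hu2 j]
    push_cast
    rfl
  have hS : (∑ i ∈ Finset.range (u + 1), (-1 : ℤ) ^ i * (u.choose i : ℤ) *
        Dp p (n'' * p ^ (s + 1) + k * p ^ s + j - i))
      = (-1 : ℤ) ^ (j + k) * Dp p n''
        * (((p - 1).choose k : ℤ) * ((u + (p - 1)).choose j : ℤ)
          + ((p - 1).choose (k - 1) : ℤ) * ((u + (p - 1)).choose (p + j) : ℤ)) := by
    rw [← Finset.sum_range_add_sum_Ico _ (show j + 1 ≤ u + 1 by omega),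
      Finset.sum_congr rfl h1, Finset.sum_congr rfl h2, ← Finset.mul_sum, ← Finset.mul_sum,
      hA, hB]
    ring
  have hfinal : (p : ℤ) ^ 2 ∣ (∑ i ∈ Finset.range (u + 1), (-1 : ℤ) ^ i * (u.choose i : ℤ) *
      Dp p (n'' * p ^ (s + 1) + k * p ^ s + j - i)) := by
    rw [hS, show u + (p - 1) = p + (u - 1) by omega]
    exact Dvd.dvd.mul_left hdvd _
  exact_mod_cast le_emultiplicity_of_pow_dvd hfinal
end

section
/- Let p ≥ 3 be a prime, u ∈ {1,…,p−1} and s ∈ ℕ₊. Then for every integer n > u·p^s, ν_p( A_{p,(p−1)(u·p^s−1)}(n) ) ≥ 1, i.e., p divides A_{p,(p−1)(u·p^s−1)}(n). -/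
open PowerSeries Finset

lemma charP_pow_series (p : ℕ) [Fact p.Prime] : CharP ((ZMod p)⟦X⟧) p :=
  charP_of_injective_ringHom
    (f := PowerSeries.C (R := ZMod p))
    (fun a b h => by simpa using congrArg (PowerSeries.constantCoeff (R := ZMod p)) h) p

lemma tele (p : ℕ) [Fact p.Prime] (N : ℕ) :
    (∏ i ∈ Finset.range N, (1 - X ^ p ^ i : (ZMod p)⟦X⟧) ^ (p - 1)) * (1 - X)
      = 1 - X ^ p ^ N := by
  haveI := charP_pow_series p
  have hp := (Fact.out : p.Prime)
  induction N with
  | zero => simp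
  | succ N ih =>
    rw [Finset.prod_range_succ]
    have h1 : (∏ i ∈ Finset.range N, (1 - X ^ p ^ i : (ZMod p)⟦X⟧) ^ (p - 1))
        * (1 - X ^ p ^ N) ^ (p - 1) * (1 - X)
        = (1 - X ^ p ^ N) ^ (p - 1) *
          ((∏ i ∈ Finset.range N, (1 - X ^ p ^ i : (ZMod p)⟦X⟧) ^ (p - 1)) * (1 - X)) := by
      ring
    rw [h1, ih]
    have h2 : (1 - X ^ p ^ N : (ZMod p)⟦X⟧) ^ (p - 1) * (1 - X ^ p ^ N)
        = (1 - X ^ p ^ N) ^ p := by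
      rw [← pow_succ, Nat.sub_add_cancel hp.one_lt.le]
    rw [h2, sub_pow_char, one_pow, ← pow_mul, ← pow_succ]

theorem stmt8 (p u s : ℕ) (hp : p.Prime) (hp3 : 3 ≤ p) (hu1 : 1 ≤ u) (hu2 : u ≤ p - 1)
    (hs : 1 ≤ s) (n : ℕ) (hn : u * p ^ s < n) :
    (p : ℤ) ∣ Acoef p ((p - 1) * (u * p ^ s - 1)) n := by
  haveI : Fact p.Prime := ⟨hp⟩
  haveI := charP_pow_series p
  set m : ℕ := u * p ^ s - 1 with hm
  set k : ℕ := (p - 1) * m with hk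
  have hpe : ∀ i : ℕ, p ^ i ≠ 0 := fun i => pow_ne_zero i hp.pos.ne'
  -- integer-level inverse identity
  set Φ : ℤ⟦X⟧ := ∏ i ∈ Finset.range (n + 1),
      (PowerSeries.invOfUnit (1 - PowerSeries.X ^ p ^ i) 1) ^ k with hΦ
  have hcc : ∀ i : ℕ, constantCoeff (R := ℤ) (1 - X ^ p ^ i) = ((1 : ℤˣ) : ℤ) := by
    intro i
    simp [map_sub, map_pow, constantCoeff_X, zero_pow (hpe i)]
  have hZ : (∏ i ∈ Finset.range (n + 1), (1 - X ^ p ^ i : ℤ⟦X⟧) ^ k) * Φ = 1 := by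
    rw [hΦ, ← Finset.prod_mul_distrib]
    apply Finset.prod_eq_one
    intro i _
    rw [← mul_pow, PowerSeries.mul_invOfUnit _ 1 (hcc i), one_pow]
  -- map to ZMod p
  set f := Int.castRingHom (ZMod p)
  set P : (ZMod p)⟦X⟧ := PowerSeries.map f Φ with hP
  set Q : (ZMod p)⟦X⟧ := ∏ i ∈ Finset.range (n + 1), (1 - X ^ p ^ i) ^ k with hQ
  have hQP : Q * P = 1 := by
    have := congrArg (PowerSeries.map f) hZ
    rw [map_mul, map_one, map_prod] at this
    simpa [map_pow, map_sub, map_one, PowerSeries.map_X] using this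
  -- the explicit inverse
  set q : ℕ := p ^ (n + 1) with hq
  set G : (ZMod p)⟦X⟧ := PowerSeries.invOfUnit (1 - X ^ q) 1 with hG
  have hccq : constantCoeff (R := ZMod p) (1 - X ^ q) = ((1 : (ZMod p)ˣ) : ZMod p) := by
    simp [map_sub, map_pow, constantCoeff_X, zero_pow (hpe (n + 1)), hq]
  have hEG : (1 - X ^ q : (ZMod p)⟦X⟧) * G = 1 :=
    PowerSeries.mul_invOfUnit _ 1 hccq
  set S : (ZMod p)⟦X⟧ := (1 - X) ^ m * G ^ m with hS
  have hQS : Q * S = 1 := by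
    have hQW : Q = (∏ i ∈ Finset.range (n + 1), (1 - X ^ p ^ i : (ZMod p)⟦X⟧) ^ (p - 1)) ^ m := by
      rw [hQ, ← Finset.prod_pow]
      refine Finset.prod_congr rfl fun i _ => ?_
      rw [← pow_mul]
    rw [hQW, hS, ← mul_assoc, ← mul_pow, tele p (n + 1), ← mul_pow, hEG, one_pow]
  have hPS : P = S := by
    calc P = P * (Q * S) := by rw [hQS, mul_one]
    _ = S * (Q * P) := by ring
    _ = S := by rw [hQP, mul_one]
  -- conclude coefficient divisibility
  rw [← ZMod.intCast_zmod_eq_zero_iff_dvd]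
  have hcast : ((Acoef p k n : ℤ) : ZMod p) = PowerSeries.coeff (R := ZMod p) n P := by
    rw [hP, PowerSeries.coeff_map]; rfl
  rw [hcast, hPS, hS]
  -- coeff n ((1-X)^m * G^m) = 0
  have hmn : m < n := lt_of_le_of_lt (Nat.sub_le _ _) hn
  have hnq : n < q := lt_of_lt_of_le (Nat.lt_pow_self (n := n) hp.one_lt)
    (Nat.pow_le_pow_right hp.pos n.le_succ)
  have hsplit : (1 - X : (ZMod p)⟦X⟧) ^ m * G ^ m
      = (1 - X) ^ m * (G ^ m - 1) + (1 - X) ^ m := by ring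
  rw [hsplit, map_add]
  have h2 : PowerSeries.coeff (R := ZMod p) n ((1 - X) ^ m * (G ^ m - 1)) = 0 := by
    have hdvd : (X : (ZMod p)⟦X⟧) ^ q ∣ (1 - X) ^ m * (G ^ m - 1) := by
      have hG1 : (X : (ZMod p)⟦X⟧) ^ q ∣ G - 1 := ⟨G, by linear_combination hEG⟩
      have hGm : (X : (ZMod p)⟦X⟧) ^ q ∣ G ^ m - 1 := by
        have := hG1.trans (sub_dvd_pow_sub_pow G 1 m)
        simpa using this
      exact hGm.mul_left _
    exact PowerSeries.X_pow_dvd_iff.mp hdvd n hnq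
  have h3 : PowerSeries.coeff (R := ZMod p) n ((1 - X : (ZMod p)⟦X⟧) ^ m) = 0 := by
    have hpoly : ((1 - X : (ZMod p)⟦X⟧)) ^ m
        = (((1 - Polynomial.X : Polynomial (ZMod p)) ^ m : Polynomial (ZMod p)) : (ZMod p)⟦X⟧) := by
      rw [Polynomial.coe_pow, Polynomial.coe_sub, Polynomial.coe_one, Polynomial.coe_X]
    rw [hpoly, Polynomial.coeff_coe]
    apply Polynomial.coeff_eq_zero_of_natDegree_lt
    calc ((1 - Polynomial.X : Polynomial (ZMod p)) ^ m).natDegree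
        ≤ m * (1 - Polynomial.X : Polynomial (ZMod p)).natDegree := Polynomial.natDegree_pow_le
      _ ≤ m * 1 := by
          exact Nat.mul_le_mul_left m (by
            simpa using (Polynomial.natDegree_sub_le (1 : Polynomial (ZMod p)) Polynomial.X))
      _ < n := by omega
  rw [h2, h3, add_zero]
end

section
/- Let p ≥ 3 be a prime and s ∈ ℕ₊. Then for every integer n > p^s, ν_p( A_{p,(p−1)(p^s−1)}(n) ) = 1; i.e., A_{p,(p−1)(p^s−1)}(n) is divisible by p but not by p². -/
open PowerSeries Finset

namespace S9

/-- integer coefficients `(-1)^j * C(p,j)/p` -/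
def cInt (p j : ℕ) : ℤ := (-1) ^ j * (p.choose j / p : ℕ)

/-- lowest nonzero digit of `m` in base `p` (0 if m = 0) -/
def lnzd (p m : ℕ) : ℕ := (m / p ^ (m.factorization p)) % p

section Arith

variable {p : ℕ}

lemma cInt_zero (hp2 : 2 ≤ p) : cInt p 0 = 0 := by
  have h : (1 : ℕ) / p = 0 := Nat.div_eq_of_lt (by omega)
  simp [cInt, h]

lemma p_mul_choose_div (hp : p.Prime) {j : ℕ} (h1 : 1 ≤ j) (h2 : j < p) :
    (p : ℤ) * (p.choose j / p : ℕ) = (p.choose j : ℕ) := by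
  have hdvd : p ∣ p.choose j := hp.dvd_choose_self (by omega) h2
  rw [← Nat.cast_mul, Nat.mul_div_cancel' hdvd]

lemma sum_cInt (hp : p.Prime) (hodd : Odd p) : ∑ j ∈ Ico 1 p, cInt p j = 0 := by
  have hp0 : (p : ℤ) ≠ 0 := by exact_mod_cast hp.pos.ne'
  apply mul_left_cancel₀ hp0
  rw [mul_zero, Finset.mul_sum]
  have h1 : ∀ j ∈ Ico 1 p, (p : ℤ) * cInt p j = (-1 : ℤ) ^ j * ((p.choose j : ℕ) : ℤ) := by
    intro j hj
    rw [mem_Ico] at hj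
    unfold cInt
    rw [show (p:ℤ) * ((-1)^j * (p.choose j / p : ℕ)) = (-1)^j * ((p:ℤ) * (p.choose j / p : ℕ)) by ring,
      p_mul_choose_div hp hj.1 hj.2]
  rw [Finset.sum_congr rfl h1]
  have halt := Int.alternating_sum_range_choose (n := p)
  rw [if_neg hp.ne_zero] at halt
  have hsplit : (∑ m ∈ range (p + 1), (-1 : ℤ) ^ m * ((p.choose m : ℕ) : ℤ))
      = 1 + ((∑ j ∈ Ico 1 p, (-1 : ℤ) ^ j * ((p.choose j : ℕ) : ℤ)) + (-1 : ℤ) ^ p * ((p.choose p : ℕ) : ℤ)) := by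
    rw [range_eq_Ico, Finset.sum_eq_sum_Ico_succ_bot (by omega : 0 < p + 1),
      Finset.sum_Ico_succ_top (by omega : 1 ≤ p)]
    simp
  rw [halt, Nat.choose_self, hodd.neg_one_pow] at hsplit
  push_cast at hsplit ⊢
  linarith

lemma d_mul_cInt (hp : p.Prime) {d : ℕ} (h1 : 1 ≤ d) (h2 : d < p) :
    (d : ℤ) * cInt p d = (-1) ^ d * ((p - 1).choose (d - 1) : ℕ) := by
  have hdvd : p ∣ p.choose d := hp.dvd_choose_self (by omega) h2
  have hnat : d * (p.choose d / p) = (p - 1).choose (d - 1) := by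
    apply Nat.eq_of_mul_eq_mul_left hp.pos
    have hkey := Nat.add_one_mul_choose_eq (p - 1) (d - 1)
    rw [show p - 1 + 1 = p from by omega, show d - 1 + 1 = d from by omega] at hkey
    calc p * (d * (p.choose d / p)) = d * (p * (p.choose d / p)) := by ring
    _ = d * p.choose d := by rw [Nat.mul_div_cancel' hdvd]
    _ = p.choose d * d := by ring
    _ = p * (p - 1).choose (d - 1) := by rw [← hkey]
  unfold cInt
  rw [show (d:ℤ) * ((-1)^d * (p.choose d / p : ℕ)) = (-1)^d * ((d * (p.choose d / p) : ℕ) : ℤ) by push_cast; ring, hnat]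

lemma choose_pred_mod (hp : p.Prime) {k : ℕ} (hk : k ≤ p - 1) :
    (((p - 1).choose k : ℕ) : ZMod p) = (-1) ^ k := by
  haveI := Fact.mk hp
  induction k with
  | zero => simp
  | succ k ih =>
    have hk' : k ≤ p - 1 := by omega
    have hpas := Nat.choose_succ_succ' (p - 1) k
    rw [show p - 1 + 1 = p from by omega] at hpas
    have h0 : ((p.choose (k + 1) : ℕ) : ZMod p) = 0 := by
      rw [ZMod.natCast_eq_zero_iff]
      exact hp.dvd_choose_self (by omega) (by omega)
    have := congrArg (fun x : ℕ => (x : ZMod p)) hpas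
    simp only [Nat.cast_add] at this
    rw [h0, ih hk'] at this
    have : (((p-1).choose (k+1) : ℕ) : ZMod p) = -(-1)^k := by linear_combination -this
    rw [this]; ring

lemma cInt_ne_zero_mod (hp : p.Prime) {d : ℕ} (h1 : 1 ≤ d) (h2 : d < p) :
    ((cInt p d : ℤ) : ZMod p) ≠ 0 := by
  haveI := Fact.mk hp
  intro hz
  have hmul := d_mul_cInt hp h1 h2
  have hcast := congrArg (fun z : ℤ => (z : ZMod p)) hmul
  push_cast at hcast
  rw [hz, mul_zero, choose_pred_mod hp (by omega : d - 1 ≤ p - 1), ← pow_add] at hcast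
  rw [show d + (d - 1) = 2 * (d - 1) + 1 by omega, pow_succ, pow_mul] at hcast
  simp at hcast

end Arith

section Digits

variable {p : ℕ}

lemma lnzd_zero : lnzd p 0 = 0 := by simp [lnzd]

lemma fact_pow_mul (hp : p.Prime) {r : ℕ} (hr : ¬ p ∣ r) (e : ℕ) :
    (p ^ e * r).factorization p = e := by
  have hr0 : r ≠ 0 := by rintro rfl; exact hr (dvd_zero p)
  rw [Nat.factorization_mul (pow_ne_zero e hp.pos.ne') hr0]
  simp [hp.factorization_pow, Nat.factorization_eq_zero_of_not_dvd hr]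

lemma lnzd_pow_mul (hp : p.Prime) {r : ℕ} (hr : ¬ p ∣ r) (e : ℕ) :
    lnzd p (p ^ e * r) = r % p := by
  unfold lnzd
  rw [fact_pow_mul hp hr e, Nat.mul_div_cancel_left r (pow_pos hp.pos e)]

lemma decomp (hp : p.Prime) {m : ℕ} (hm : m ≠ 0) :
    m = p ^ (m.factorization p) * (m / p ^ (m.factorization p)) ∧
      ¬ p ∣ (m / p ^ (m.factorization p)) := by
  constructor
  · exact (Nat.ordProj_mul_ordCompl_eq_self m p).symm
  · exact Nat.not_dvd_ordCompl hp hm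

lemma lnzd_small (hp : p.Prime) {a : ℕ} (h1 : 1 ≤ a) (h2 : a < p) : lnzd p a = a := by
  have hnd : ¬ p ∣ a := fun h => by have := Nat.le_of_dvd (by omega) h; omega
  unfold lnzd
  rw [Nat.factorization_eq_zero_of_not_dvd hnd]
  simp [Nat.mod_eq_of_lt h2]

lemma lnzd_pow_mul' (hp : p.Prime) (t a : ℕ) : lnzd p (p ^ t * a) = lnzd p a := by
  rcases Nat.eq_zero_or_pos a with rfl | ha
  · simp [lnzd_zero]
  · obtain ⟨hdec, hnd⟩ := decomp hp (m := a) ha.ne'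
    set f := a.factorization p
    set r := a / p ^ f with hr
    have h1 : p ^ t * a = p ^ (t + f) * r := by rw [hdec, pow_add]; ring
    rw [h1, lnzd_pow_mul hp hnd (t + f)]
    conv_rhs => rw [hdec]
    rw [lnzd_pow_mul hp hnd f]

lemma lnzd_add_low (hp : p.Prime) {t a b : ℕ} (hb0 : 0 < b) (hbt : b < p ^ t) :
    lnzd p (p ^ t * a + b) = lnzd p b := by
  obtain ⟨hdec, hnd⟩ := decomp hp (m := b) (by omega)
  set f := b.factorization p
  set r := b / p ^ f with hr
  have hfb : p ^ f ≤ b := Nat.ordProj_le p (by omega)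
  have hft : f < t := by
    by_contra h
    have : p ^ t ≤ p ^ f := Nat.pow_le_pow_right hp.pos (by omega)
    omega
  have hpt : p ^ t = p ^ f * p ^ (t - f) := by rw [← pow_add]; congr 1; omega
  have hsum : p ^ t * a + b = p ^ f * (p ^ (t - f) * a + r) := by
    rw [hpt]; conv_lhs => rw [hdec]
    ring
  have hnd2 : ¬ p ∣ (p ^ (t - f) * a + r) := by
    intro h
    apply hnd
    have hd1 : p ∣ p ^ (t - f) * a := Dvd.dvd.mul_right (dvd_pow_self p (by omega)) a
    exact (Nat.dvd_add_right hd1).mp h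
  rw [hsum, lnzd_pow_mul hp hnd2 f]
  have hps : p ^ (t - f) = p * p ^ (t - f - 1) := by rw [← pow_succ']; congr 1; omega
  have hmod : (p ^ (t - f) * a + r) % p = r % p := by
    rw [hps, mul_assoc]
    rw [Nat.mul_add_mod]
  rw [hmod]
  conv_rhs => rw [hdec]
  rw [lnzd_pow_mul hp hnd f]

lemma lnzd_add_high (hp : p.Prime) {s m : ℕ} (hm : 1 ≤ m) (hnd : ¬ p ^ s ∣ m) :
    lnzd p (m + p ^ s) = lnzd p m := by
  obtain ⟨hdec, hr⟩ := decomp hp (m := m) (by omega)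
  set e := m.factorization p with he
  set r := m / p ^ e with hrr
  have hes : e < s := by
    by_contra h
    exact hnd (dvd_trans (pow_dvd_pow p (by omega)) (Nat.ordProj_dvd m p))
  have hpt : p ^ s = p ^ e * p ^ (s - e) := by rw [← pow_add]; congr 1; omega
  have hsum : m + p ^ s = p ^ e * (r + p ^ (s - e)) := by
    rw [hpt]; conv_lhs => rw [hdec]
    ring
  have hnd2 : ¬ p ∣ (r + p ^ (s - e)) := by
    intro h
    apply hr
    have hd1 : p ∣ p ^ (s - e) := dvd_pow_self p (by omega)
    rw [add_comm] at h
    exact (Nat.dvd_add_right hd1).mp h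
  rw [hsum, lnzd_pow_mul hp hnd2 e]
  have hps : p ^ (s - e) = r.succ * p - r.succ * p + p ^ (s - e) := by omega
  have hmod : (r + p ^ (s - e)) % p = r % p := by
    have h2 : p ^ (s - e) = p ^ (s - e - 1) * p := by rw [← pow_succ]; congr 1; omega
    rw [h2]
    exact Nat.add_mul_mod_self_right r (p ^ (s-e-1)) p
  rw [hmod]
  conv_rhs => rw [hdec]
  rw [lnzd_pow_mul hp hr e]

lemma lnzd_pos (hp : p.Prime) {m : ℕ} (hm : m ≠ 0) : 1 ≤ lnzd p m ∧ lnzd p m < p := by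
  obtain ⟨hdec, hnd⟩ := decomp hp hm
  unfold lnzd
  constructor
  · rcases Nat.eq_zero_or_pos ((m / p ^ (m.factorization p)) % p) with h | h
    · exact absurd (Nat.dvd_of_mod_eq_zero h) hnd
    · omega
  · exact Nat.mod_lt _ hp.pos

lemma fact_le (hp : p.Prime) {m : ℕ} (hm : m ≠ 0) : m.factorization p ≤ m := by
  have h1 : m.factorization p < p ^ (m.factorization p) := Nat.lt_pow_self hp.one_lt
  have h2 : p ^ (m.factorization p) ≤ m := Nat.ordProj_le p hm
  omega

lemma digit_unique (hp : p.Prime) {m i j : ℕ} (hm : m ≠ 0) (hj1 : 1 ≤ j) (hjp : j < p) :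
    (p ^ i * j ≤ m ∧ p ^ (i + 1) ∣ m - p ^ i * j) ↔
      (i = m.factorization p ∧ j = lnzd p m) := by
  obtain ⟨hdec, hr⟩ := decomp hp hm
  constructor
  · rintro ⟨h1, h2⟩
    obtain ⟨u, hu⟩ := h2
    have hm2 : m = p ^ i * (j + p * u) := by
      rw [pow_succ] at hu
      have hx : m = p ^ i * j + p ^ i * p * u := by omega
      rw [hx]; ring
    have hnd2 : ¬ p ∣ (j + p * u) := by
      intro h
      have hdj : p ∣ j := (Nat.dvd_add_right ⟨u, rfl⟩).mp (by rwa [add_comm] at h)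
      have := Nat.le_of_dvd (by omega) hdj
      omega
    have hie : i = m.factorization p := by rw [hm2, fact_pow_mul hp hnd2]
    refine ⟨hie, ?_⟩
    have hlz : lnzd p m = j := by
      rw [hm2, lnzd_pow_mul hp hnd2 i, Nat.add_mul_mod_self_left, Nat.mod_eq_of_lt hjp]
    exact hlz.symm
  · rintro ⟨hie, hj⟩
    subst hie
    have hj' : j = (m / p ^ (m.factorization p)) % p := hj
    have hm2 : m = p ^ (m.factorization p) * j
        + p ^ (m.factorization p + 1) * (m / p ^ (m.factorization p) / p) := by
      conv_lhs => rw [hdec]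
      conv_lhs => rw [← Nat.div_add_mod (m / p ^ (m.factorization p)) p]
      rw [← hj', pow_succ]
      ring
    constructor
    · omega
    · exact ⟨m / p ^ (m.factorization p) / p, by omega⟩

end Digits

section WindowSum

variable {p : ℕ}

/-- The window-sum function over `ZMod p`. -/
noncomputable def W (p m : ℕ) : ZMod p := ((cInt p (lnzd p m) : ℤ) : ZMod p)

lemma W_zero (hp2 : 2 ≤ p) : W p 0 = 0 := by
  unfold W
  rw [lnzd_zero, cInt_zero hp2]
  simp

lemma chunk {M : Type*} [AddCommMonoid M] (f : ℕ → M) (A B : ℕ) :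
    ∑ m ∈ range (A * B), f m = ∑ a ∈ range A, ∑ b ∈ range B, f (B * a + b) := by
  induction A with
  | zero => simp
  | succ A ih =>
    have h1 : (A + 1) * B = A * B + B := by ring
    have h2 : ∑ i ∈ Ico (A * B) (A * B + B), f i = ∑ b ∈ range B, f (B * A + b) := by
      rw [Finset.sum_Ico_eq_sum_range]
      simp only [Nat.add_sub_cancel_left]
      exact Finset.sum_congr rfl fun b _ => by rw [mul_comm B A]
    rw [Finset.sum_range_succ, ← ih, h1, ← h2]
    simp only [range_eq_Ico]
    rw [Finset.sum_Ico_consecutive f (Nat.zero_le (A * B)) (Nat.le_add_right (A * B) B)]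

lemma range_pos_insert {N : ℕ} (hN : 0 < N) :
    range N = insert 0 (Ioo 0 N) := by
  ext x
  simp only [Finset.mem_range, Finset.mem_insert, Finset.mem_Ioo]
  omega

lemma full_period (hp : p.Prime) (hodd : Odd p) (t : ℕ) :
    ∑ m ∈ range (p ^ t), W p m = 0 := by
  induction t with
  | zero => simpa using W_zero hp.two_le
  | succ t ih =>
    have hpt : 0 < p ^ t := pow_pos hp.pos t
    rw [pow_succ, mul_comm, chunk (W p) p (p ^ t)]
    have hIoo : ∑ b ∈ Ioo 0 (p ^ t), W p b = 0 := by
      have h := ih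
      rw [range_pos_insert hpt, Finset.sum_insert (by simp), W_zero hp.two_le, zero_add] at h
      exact h
    have hterm : ∀ a ∈ range p, ∑ b ∈ range (p ^ t), W p (p ^ t * a + b) = W p a := by
      intro a _
      rw [range_pos_insert hpt, Finset.sum_insert (by simp), add_zero]
      have h2 : ∀ b ∈ Ioo 0 (p ^ t), W p (p ^ t * a + b) = W p b := by
        intro b hb
        rw [Finset.mem_Ioo] at hb
        unfold W
        rw [lnzd_add_low hp hb.1 hb.2]
      rw [Finset.sum_congr rfl h2, hIoo, add_zero]
      unfold W
      rw [lnzd_pow_mul' hp]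
    rw [Finset.sum_congr rfl hterm, range_pos_insert hp.pos]
    rw [Finset.sum_insert (by simp), W_zero hp.two_le, zero_add]
    have h3 : ∀ a ∈ Ioo 0 p, W p a = ((cInt p a : ℤ) : ZMod p) := by
      intro a ha
      rw [Finset.mem_Ioo] at ha
      unfold W
      rw [lnzd_small hp ha.1 ha.2]
    rw [Finset.sum_congr rfl h3]
    have h4 : Ioo 0 p = Ico 1 p := by ext x; simp only [Finset.mem_Ioo, Finset.mem_Ico]; omega
    rw [h4, ← Int.cast_sum, sum_cInt hp hodd, Int.cast_zero]

lemma Ioc_insert {a b : ℕ} (h : a < b) : Ioc a b = insert (a + 1) (Ioc (a + 1) b) := by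
  ext x
  simp only [Finset.mem_Ioc, Finset.mem_insert]
  omega

lemma Ioc_top_insert {a b : ℕ} (h : a ≤ b) : Ioc a (b + 1) = insert (b + 1) (Ioc a b) := by
  ext x
  simp only [Finset.mem_Ioc, Finset.mem_insert]
  omega

lemma window_sum (hp : p.Prime) (hodd : Odd p) (s : ℕ) :
    ∀ n, p ^ s ≤ n → ∑ m ∈ Ioc (n - p ^ s) n, W p m = W p (n / p ^ s) := by
  have hps : 0 < p ^ s := pow_pos hp.pos s
  intro n hn
  induction n, hn using Nat.le_induction with
  | base =>
    rw [Nat.sub_self, Nat.div_self hps]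
    have hIoo : ∑ b ∈ Ioo 0 (p ^ s), W p b = 0 := by
      have h := full_period hp hodd s
      rw [range_pos_insert hps, Finset.sum_insert (by simp), W_zero hp.two_le, zero_add] at h
      exact h
    have h3 : Ioc 0 (p ^ s) = insert (p ^ s) (Ioo 0 (p ^ s)) := by
      ext x; simp only [Finset.mem_Ioc, Finset.mem_insert, Finset.mem_Ioo]; omega
    rw [h3, Finset.sum_insert (by simp), hIoo, add_zero]
    have h4 : lnzd p (p ^ s) = lnzd p 1 := by
      have h := lnzd_pow_mul' hp s 1
      rwa [mul_one] at h
    unfold W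
    rw [h4]
  | succ n hn ih =>
    have ha : n + 1 - p ^ s = (n - p ^ s) + 1 := by omega
    have hsplit : ∑ m ∈ Ioc (n + 1 - p ^ s) (n + 1), W p m
        = ∑ m ∈ Ioc (n - p ^ s) n, W p m + W p (n + 1) - W p (n + 1 - p ^ s) := by
      rw [ha, Finset.sum_Ioc_succ_top (by omega : n - p ^ s + 1 ≤ n)]
      rw [Ioc_insert (by omega : n - p ^ s < n), Finset.sum_insert (by simp), ← ha]
      ring
    rw [hsplit, ih]
    by_cases hdvd : p ^ s ∣ (n + 1)
    · obtain ⟨q', hq⟩ := hdvd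
      have hq2 : 2 ≤ q' := by
        by_contra h
        interval_cases q'
        · omega
        · rw [mul_one] at hq; omega
      have hsub : p ^ s * (q' - 1) = p ^ s * q' - p ^ s := by
        rw [Nat.mul_sub, mul_one]
      have hW1 : W p (n + 1) = W p q' := by
        unfold W; rw [hq, lnzd_pow_mul' hp]
      have hW2 : W p (n + 1 - p ^ s) = W p (q' - 1) := by
        unfold W
        rw [show n + 1 - p ^ s = p ^ s * (q' - 1) by omega, lnzd_pow_mul' hp]
      have hdiv1 : (n + 1) / p ^ s = q' := by rw [hq, Nat.mul_div_cancel_left _ hps]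
      have hdiv2 : n / p ^ s = q' - 1 := by
        have hn2 : n = p ^ s * (q' - 1) + (p ^ s - 1) := by omega
        rw [hn2, Nat.mul_add_div hps, Nat.div_eq_of_lt (by omega), add_zero]
      rw [hW1, hW2, hdiv1, hdiv2]
      ring
    · have hW1 : W p (n + 1) = W p (n + 1 - p ^ s) := by
        unfold W
        congr 1
        have hm1 : 1 ≤ n + 1 - p ^ s := by omega
        have hnd : ¬ p ^ s ∣ (n + 1 - p ^ s) := by
          intro h
          apply hdvd
          have : n + 1 = (n + 1 - p ^ s) + p ^ s := by omega
          rw [this]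
          exact Nat.dvd_add h dvd_rfl
        have := lnzd_add_high hp hm1 hnd
        rw [show n + 1 - p ^ s + p ^ s = n + 1 by omega] at this
        rw [this]
      have hdiv : (n + 1) / p ^ s = n / p ^ s := by
        rw [Nat.succ_div, if_neg hdvd, add_zero]
      rw [hW1, hdiv]
      ring

end WindowSum

section Series

variable {A : Type*} [CommRing A]

/-- geometric series `∑ X^{Qt}` -/
noncomputable def geom (A : Type*) [CommRing A] (Q : ℕ) : PowerSeries A :=
  PowerSeries.mk fun t => if Q ∣ t then 1 else 0

lemma one_sub_X_pow_mul_geom (Q : ℕ) (hQ : 1 ≤ Q) :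
    (1 - X ^ Q) * geom A Q = 1 := by
  ext k
  rw [sub_mul, one_mul, map_sub, PowerSeries.coeff_X_pow_mul', PowerSeries.coeff_one]
  unfold geom
  rw [PowerSeries.coeff_mk]
  by_cases hk : Q ≤ k
  · rw [if_pos hk, PowerSeries.coeff_mk]
    have hiff : Q ∣ k ↔ Q ∣ k - Q := by
      constructor
      · intro h; exact Nat.dvd_sub h dvd_rfl
      · intro h
        have : k = (k - Q) + Q := by omega
        rw [this]; exact Nat.dvd_add h dvd_rfl
    have hk0 : ¬ (k = 0) := by omega
    rw [if_neg hk0]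
    by_cases hd : Q ∣ k
    · rw [if_pos hd, if_pos (hiff.mp hd)]; ring
    · rw [if_neg hd, if_neg (fun h => hd (hiff.mpr h))]; ring
  · rw [if_neg hk]
    by_cases hk0 : k = 0
    · subst hk0
      rw [if_pos (dvd_zero Q), if_pos rfl]; ring
    · have hnd : ¬ Q ∣ k := fun h => hk (Nat.le_of_dvd (by omega) h)
      rw [if_neg hnd, if_neg hk0]; ring


/-- `V A p q = ∑_{j=1}^{p-1} cInt p j · X^{qj}` -/
noncomputable def Vs (A : Type*) [CommRing A] (p q : ℕ) : PowerSeries A :=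
  ∑ j ∈ Ico 1 p, C (R := A) ((cInt p j : ℤ) : A) * X ^ (q * j)

lemma I1 {p : ℕ} (hp : p.Prime) (hodd : Odd p) (q : ℕ) :
    (1 - X ^ q : PowerSeries A) ^ p
      = 1 - X ^ (q * p) + (p : PowerSeries A) * Vs A p q := by
  have h : (1 - X ^ q : PowerSeries A) = (-(X ^ q)) + 1 := by ring
  rw [h, add_pow]
  have hpeel : ∑ k ∈ range (p + 1), (-(X ^ q) : PowerSeries A) ^ k * 1 ^ (p - k) * (p.choose k : PowerSeries A)
      = ((-(X ^ q)) ^ 0 * 1 ^ (p - 0) * (p.choose 0 : PowerSeries A))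
        + ((∑ k ∈ Ico 1 p, (-(X ^ q)) ^ k * 1 ^ (p - k) * (p.choose k : PowerSeries A))
        + ((-(X ^ q)) ^ p * 1 ^ (p - p) * (p.choose p : PowerSeries A))) := by
    rw [range_eq_Ico, Finset.sum_eq_sum_Ico_succ_bot (by omega : 0 < p + 1),
      Finset.sum_Ico_succ_top hp.one_lt.le]
  rw [hpeel]
  have hmid : ∑ k ∈ Ico 1 p, (-(X ^ q) : PowerSeries A) ^ k * 1 ^ (p - k) * (p.choose k : PowerSeries A)
      = (p : PowerSeries A) * Vs A p q := by
    unfold Vs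
    rw [Finset.mul_sum]
    apply Finset.sum_congr rfl
    intro j hj
    rw [mem_Ico] at hj
    have hz : (p : ℤ) * cInt p j = (-1 : ℤ) ^ j * ((p.choose j : ℕ) : ℤ) := by
      unfold cInt
      rw [show (p:ℤ) * ((-1)^j * (p.choose j / p : ℕ)) = (-1)^j * ((p:ℤ) * (p.choose j / p : ℕ)) by ring,
        p_mul_choose_div hp hj.1 hj.2]
    have hzA : (p : A) * ((cInt p j : ℤ) : A) = (-1 : A) ^ j * ((p.choose j : ℕ) : A) := by
      have := congrArg (fun z : ℤ => (z : A)) hz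
      push_cast at this
      exact this
    have hcast : (p : PowerSeries A) * C (R := A) ((cInt p j : ℤ) : A)
        = (-1 : PowerSeries A) ^ j * ((p.choose j : ℕ) : PowerSeries A) := by
      rw [← map_natCast (C (R := A)) p, ← map_mul, hzA, map_mul, map_pow, map_neg, map_one,
        map_natCast]
    calc (-(X ^ q) : PowerSeries A) ^ j * 1 ^ (p - j) * (p.choose j : PowerSeries A)
        = (-1 : PowerSeries A) ^ j * ((p.choose j : ℕ) : PowerSeries A) * (X ^ q) ^ j := by
          rw [neg_pow, one_pow]; ring
      _ = (p : PowerSeries A) * C (R := A) ((cInt p j : ℤ) : A) * (X ^ q) ^ j := by rw [hcast]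
      _ = (p : PowerSeries A) * (C (R := A) ((cInt p j : ℤ) : A) * X ^ (q * j)) := by
          rw [← pow_mul]; ring
  rw [hmid, hodd.neg_pow, Nat.choose_self, Nat.choose_zero_right, ← pow_mul]
  push_cast
  ring


end Series

section ModP2

variable {p : ℕ}

local notation "R" => ZMod (p ^ 2)

lemma ppR : ((p : ℕ) : R) * ((p : ℕ) : R) = 0 := by
  rw [← Nat.cast_mul, ← pow_two]
  exact ZMod.natCast_self (p ^ 2)

lemma ppPS : ((p : ℕ) : PowerSeries R) * ((p : ℕ) : PowerSeries R) = 0 := by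
  rw [← Nat.cast_mul, ← map_natCast (C : ZMod (p ^ 2) →+* PowerSeries (ZMod (p ^ 2))) (p * p),
    show ((p * p : ℕ) : ZMod (p ^ 2)) = 0 from by rw [← pow_two]; exact ZMod.natCast_self _,
    map_zero]

lemma natCast_eq_zero_of_sq_dvd {m : ℕ} (h : p ^ 2 ∣ m) : ((m : ℕ) : PowerSeries R) = 0 := by
  obtain ⟨c, rfl⟩ := h
  push_cast
  have h2 : ((p : ℕ) : PowerSeries R) ^ 2 = 0 :=
    (pow_two ((p : ℕ) : PowerSeries R)).trans (ppPS (p := p))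
  rw [h2, zero_mul]

lemma L1 (hp : p.Prime) (a b : PowerSeries R) :
    (a + (p : PowerSeries R) * b) ^ p = a ^ p := by
  rw [add_pow, Finset.sum_range_succ]
  have hzero : ∀ k ∈ range p,
      a ^ k * ((p : PowerSeries R) * b) ^ (p - k) * (p.choose k : PowerSeries R) = 0 := by
    intro k hk
    rw [mem_range] at hk
    have hdvd : p ^ 2 ∣ p ^ (p - k) * p.choose k := by
      rcases Nat.eq_zero_or_pos k with rfl | hk0
      · refine Dvd.dvd.mul_right ?_ _
        rw [Nat.sub_zero]
        exact pow_dvd_pow p hp.two_le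
      · rw [pow_two]
        exact mul_dvd_mul (dvd_pow_self p (by omega : p - k ≠ 0))
          (hp.dvd_choose_self (by omega) hk)
    have hc : ((p ^ (p - k) * p.choose k : ℕ) : PowerSeries R) = 0 :=
      natCast_eq_zero_of_sq_dvd hdvd
    calc a ^ k * ((p : PowerSeries R) * b) ^ (p - k) * (p.choose k : PowerSeries R)
        = ((p ^ (p - k) * p.choose k : ℕ) : PowerSeries R) * (a ^ k * b ^ (p - k)) := by
          push_cast; ring
      _ = 0 := by rw [hc, zero_mul]
  rw [Finset.sum_eq_zero hzero, zero_add]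
  simp

lemma L2 (hp : p.Prime) {s : ℕ} (hs : 1 ≤ s) (b : PowerSeries R) :
    (1 + (p : PowerSeries R) * b) ^ (p ^ s) = 1 := by
  have h1 : (1 + (p : PowerSeries R) * b) ^ p = 1 := by
    have h := L1 hp 1 b
    rwa [one_pow] at h
  have h2 : p ^ s = p * p ^ (s - 1) := by
    rw [← pow_succ']
    congr 1; omega
  rw [h2, pow_mul, h1, one_pow]

lemma prodOnePlus (t : ℕ) (a : ℕ → PowerSeries R) :
    ∏ i ∈ range t, (1 + (p : PowerSeries R) * a i)
      = 1 + (p : PowerSeries R) * ∑ i ∈ range t, a i := by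
  induction t with
  | zero => simp
  | succ t ih =>
    rw [Finset.prod_range_succ, ih, Finset.sum_range_succ]
    have hpp := ppPS (p := p)
    linear_combination (∑ i ∈ range t, a i) * (a t) * hpp

/-- the correction series -/
noncomputable def U (p t : ℕ) : PowerSeries (ZMod (p ^ 2)) :=
  ∑ i ∈ range t, Vs (ZMod (p ^ 2)) p (p ^ i) * geom (ZMod (p ^ 2)) (p ^ (i + 1))

/-- the D-type product -/
noncomputable def G (p t : ℕ) : PowerSeries (ZMod (p ^ 2)) :=
  ∏ i ∈ range t, (1 - X ^ p ^ i) ^ (p - 1)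

noncomputable def H (p t : ℕ) : PowerSeries (ZMod (p ^ 2)) :=
  ∏ i ∈ range t, (1 - X ^ p ^ i)

lemma perFactor (hp : p.Prime) (hodd : Odd p) (i : ℕ) :
    (1 - X ^ p ^ i : PowerSeries R) ^ p
      = (1 - X ^ p ^ (i + 1)) *
        (1 + (p : PowerSeries R) * (Vs R p (p ^ i) * geom R (p ^ (i + 1)))) := by
  calc (1 - X ^ p ^ i : PowerSeries R) ^ p
      = 1 - X ^ p ^ (i+1) + (p : PowerSeries R) * Vs R p (p ^ i) := by
        rw [I1 hp hodd (p ^ i), ← pow_succ]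
    _ = (1 - X ^ p ^ (i + 1)) *
        (1 + (p : PowerSeries R) * (Vs R p (p ^ i) * geom R (p ^ (i + 1)))) := by
        have hg := one_sub_X_pow_mul_geom (A := R) (p ^ (i + 1))
          (Nat.one_le_iff_ne_zero.mpr (pow_ne_zero _ hp.pos.ne'))
        linear_combination (-((p : PowerSeries R) * Vs R p (p ^ i))) * hg

lemma constCoeff_H (hp : p.Prime) (t : ℕ) : constantCoeff (H p t) = 1 := by
  unfold H
  rw [map_prod]
  apply Finset.prod_eq_one
  intro i _
  rw [map_sub, map_one, map_pow, constantCoeff_X, zero_pow (pow_ne_zero i hp.pos.ne'), sub_zero]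

lemma keyIdentity (hp : p.Prime) (hodd : Odd p) (t : ℕ) :
    (1 - X) * G p t = (1 - X ^ p ^ t) * (1 + (p : PowerSeries R) * U p t) := by
  have hunit : IsUnit (H p t) := by
    rw [PowerSeries.isUnit_iff_constantCoeff, constCoeff_H hp]
    exact isUnit_one
  apply hunit.mul_left_cancel
  have hGH : G p t * H p t = ∏ i ∈ range t, (1 - X ^ p ^ i : PowerSeries R) ^ p := by
    unfold G H
    rw [← Finset.prod_mul_distrib]
    apply Finset.prod_congr rfl
    intro i _
    rw [← pow_succ, Nat.sub_add_cancel hp.one_le]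
  have hprod : ∏ i ∈ range t, (1 - X ^ p ^ i : PowerSeries R) ^ p
      = (∏ i ∈ range t, (1 - X ^ p ^ (i + 1) : PowerSeries R))
        * (1 + (p : PowerSeries R) * U p t) := by
    calc ∏ i ∈ range t, (1 - X ^ p ^ i : PowerSeries R) ^ p
        = ∏ i ∈ range t, ((1 - X ^ p ^ (i + 1)) *
            (1 + (p : PowerSeries R) * (Vs R p (p ^ i) * geom R (p ^ (i + 1))))) := by
          exact Finset.prod_congr rfl fun i _ => perFactor hp hodd i
      _ = (∏ i ∈ range t, (1 - X ^ p ^ (i + 1) : PowerSeries R))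
            * (1 + (p : PowerSeries R) * U p t) := by
          rw [Finset.prod_mul_distrib, prodOnePlus]
          rfl
  have htel : (1 - X) * (∏ i ∈ range t, (1 - X ^ p ^ (i + 1) : PowerSeries R))
      = H p t * (1 - X ^ p ^ t) := by
    have h1 := Finset.prod_range_succ' (fun i => (1 - X ^ p ^ i : PowerSeries R)) t
    have h2 := Finset.prod_range_succ (fun i => (1 - X ^ p ^ i : PowerSeries R)) t
    unfold H
    calc (1 - X) * (∏ i ∈ range t, (1 - X ^ p ^ (i + 1) : PowerSeries R))
        = (∏ i ∈ range t, (1 - X ^ p ^ (i + 1) : PowerSeries R)) * (1 - X ^ p ^ 0) := by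
          rw [pow_zero, pow_one]; ring
      _ = ∏ i ∈ range (t + 1), (1 - X ^ p ^ i : PowerSeries R) := h1.symm
      _ = (∏ i ∈ range t, (1 - X ^ p ^ i : PowerSeries R)) * (1 - X ^ p ^ t) := h2
  calc H p t * ((1 - X) * G p t)
      = (1 - X) * (G p t * H p t) := by ring
    _ = (1 - X) * ((∏ i ∈ range t, (1 - X ^ p ^ (i + 1) : PowerSeries R))
          * (1 + (p : PowerSeries R) * U p t)) := by rw [hGH, hprod]
    _ = ((1 - X) * (∏ i ∈ range t, (1 - X ^ p ^ (i + 1) : PowerSeries R)))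
          * (1 + (p : PowerSeries R) * U p t) := by ring
    _ = (H p t * (1 - X ^ p ^ t)) * (1 + (p : PowerSeries R) * U p t) := by rw [htel]
    _ = H p t * ((1 - X ^ p ^ t) * (1 + (p : PowerSeries R) * U p t)) := by ring

lemma freshman (hp : p.Prime) (hodd : Odd p) {s : ℕ} (hs : 1 ≤ s) :
    (1 - X : PowerSeries R) ^ (p ^ s) = (1 - X ^ p ^ (s - 1)) ^ p := by
  obtain ⟨u, rfl⟩ : ∃ u, s = u + 1 := ⟨s - 1, by omega⟩
  clear hs
  simp only [Nat.add_sub_cancel]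
  induction u with
  | zero => rw [zero_add, pow_one, pow_zero, pow_one]
  | succ u ih =>
    have h1 : p ^ (u + 1 + 1) = p ^ (u + 1) * p := by rw [pow_succ]
    rw [h1, pow_mul, ih]
    have hI := I1 (A := R) hp hodd (p ^ u)
    rw [← pow_succ] at hI
    rw [hI]
    exact L1 hp _ _

/-- the mapped A-series -/
noncomputable def Aser (p k t : ℕ) : PowerSeries (ZMod (p ^ 2)) :=
  PowerSeries.map (Int.castRingHom (ZMod (p ^ 2)))
    (∏ i ∈ range t, (PowerSeries.invOfUnit (1 - X ^ p ^ i) 1) ^ k)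

lemma Aser_mul_G (hp : p.Prime) {s t : ℕ} (hs : 1 ≤ s) :
    Aser p ((p - 1) * (p ^ s - 1)) t * (G p t) ^ (p ^ s - 1) = 1 := by
  set k := (p - 1) * (p ^ s - 1) with hk
  have hZ : (∏ i ∈ range t, (PowerSeries.invOfUnit (1 - X ^ p ^ i : PowerSeries ℤ) 1) ^ k)
      * (∏ i ∈ range t, (1 - X ^ p ^ i : PowerSeries ℤ)) ^ k = 1 := by
    rw [← Finset.prod_pow, ← Finset.prod_mul_distrib]
    apply Finset.prod_eq_one
    intro i _
    rw [← mul_pow]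
    have hc : constantCoeff (1 - X ^ p ^ i : PowerSeries ℤ) = ((1 : ℤˣ) : ℤ) := by
      rw [map_sub, map_one, map_pow, constantCoeff_X,
        zero_pow (pow_ne_zero i hp.pos.ne'), sub_zero, Units.val_one]
    rw [mul_comm, PowerSeries.mul_invOfUnit _ _ hc, one_pow]
  have hmap := congrArg (PowerSeries.map (Int.castRingHom (ZMod (p ^ 2)))) hZ
  rw [map_mul, map_one] at hmap
  have h2 : PowerSeries.map (Int.castRingHom (ZMod (p ^ 2)))
        ((∏ i ∈ range t, (1 - X ^ p ^ i : PowerSeries ℤ)) ^ k)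
      = (H p t) ^ k := by
    unfold H
    rw [map_pow, map_prod]
    congr 1
    apply Finset.prod_congr rfl
    intro i _
    rw [map_sub, map_one, map_pow, PowerSeries.map_X]
  have h3 : (H p t) ^ k = (G p t) ^ (p ^ s - 1) := by
    unfold H G
    rw [hk, pow_mul, ← Finset.prod_pow]
  rw [h2, h3] at hmap
  exact hmap

lemma master (hp : p.Prime) (hodd : Odd p) {s t : ℕ} (hs : 1 ≤ s) :
    Aser p ((p - 1) * (p ^ s - 1)) t * (1 - X ^ p ^ t) ^ (p ^ s)
      = (1 - X) ^ (p ^ s) * G p t := by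
  have hkey := keyIdentity hp hodd t
  have hL2 := L2 hp hs (U p t)
  have h1 : ((1 - X) * G p t : PowerSeries R) ^ (p ^ s) = (1 - X ^ p ^ t) ^ (p ^ s) := by
    rw [hkey, mul_pow, hL2, mul_one]
  rw [← h1, mul_pow]
  have hG : (G p t : PowerSeries R) ^ (p ^ s) = (G p t) ^ (p ^ s - 1) * G p t := by
    rw [← pow_succ, Nat.sub_add_cancel (pow_pos hp.pos s)]
  rw [hG]
  have hA := Aser_mul_G hp (t := t) hs
  calc Aser p ((p - 1) * (p ^ s - 1)) t * ((1 - X) ^ p ^ s * ((G p t) ^ (p ^ s - 1) * G p t))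
      = (1 - X) ^ p ^ s * G p t
        * (Aser p ((p - 1) * (p ^ s - 1)) t * (G p t) ^ (p ^ s - 1)) := by ring
    _ = (1 - X) ^ p ^ s * G p t := by rw [hA, mul_one]

lemma coeff_U (hp : p.Prime) {n m : ℕ} (h1 : 1 ≤ m) (h2 : m ≤ n) :
    coeff m (U p (n + 1)) = ((cInt p (lnzd p m) : ℤ) : R) := by
  have hm0 : m ≠ 0 := by omega
  obtain ⟨hd1, hd2⟩ := lnzd_pos hp hm0
  have heN : m.factorization p ∈ range (n + 1) := by
    rw [mem_range]
    have := fact_le hp hm0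
    omega
  have hdI : lnzd p m ∈ Ico 1 p := by rw [mem_Ico]; exact ⟨hd1, hd2⟩
  unfold U Vs
  simp only [Finset.sum_mul, map_sum]
  have hterm : ∀ i ∈ range (n + 1), ∀ j ∈ Ico 1 p,
      coeff m (C ((cInt p j : ℤ) : R) * X ^ (p ^ i * j) * geom R (p ^ (i + 1)))
        = if i = m.factorization p ∧ j = lnzd p m then ((cInt p j : ℤ) : R) else 0 := by
    intro i _ j hj
    rw [mem_Ico] at hj
    rw [mul_assoc, PowerSeries.coeff_C_mul, PowerSeries.coeff_X_pow_mul']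
    have hcond := digit_unique hp (i := i) (j := j) hm0 hj.1 hj.2
    by_cases hle : p ^ i * j ≤ m
    · rw [if_pos hle]
      unfold geom
      rw [PowerSeries.coeff_mk]
      by_cases hdv : p ^ (i + 1) ∣ m - p ^ i * j
      · obtain ⟨hie, hjd⟩ := hcond.mp ⟨hle, hdv⟩
        rw [if_pos hdv, if_pos ⟨hie, hjd⟩, mul_one]
      · rw [if_neg hdv, mul_zero, if_neg (fun hc => hdv (hcond.mpr hc).2)]
    · rw [if_neg hle, mul_zero, if_neg (fun hc => hle (hcond.mpr hc).1)]
  rw [Finset.sum_congr rfl (fun i hi => Finset.sum_congr rfl (fun j hj => hterm i hi j hj))]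
  have houter : ∀ i ∈ range (n + 1), i ≠ m.factorization p →
      (∑ j ∈ Ico 1 p, if i = m.factorization p ∧ j = lnzd p m
        then ((cInt p j : ℤ) : R) else 0) = 0 :=
    fun i _ hne => Finset.sum_eq_zero fun j _ => if_neg (fun hc => hne hc.1)
  rw [Finset.sum_eq_single_of_mem _ heN houter]
  have hinner : ∀ j ∈ Ico 1 p, j ≠ lnzd p m →
      (if m.factorization p = m.factorization p ∧ j = lnzd p m
        then ((cInt p j : ℤ) : R) else 0) = 0 :=
    fun j _ hne => if_neg (fun hc => hne hc.2)
  rw [Finset.sum_eq_single_of_mem _ hdI hinner, if_pos ⟨rfl, rfl⟩]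

lemma coeff_G_sub (hp : p.Prime) (hodd : Odd p) {n m : ℕ} (h1 : 1 ≤ m) (h2 : m ≤ n) :
    coeff m (G p (n + 1)) - coeff (m - 1) (G p (n + 1))
      = (p : R) * ((cInt p (lnzd p m) : ℤ) : R) := by
  obtain ⟨m', rfl⟩ : ∃ m', m = m' + 1 := ⟨m - 1, by omega⟩
  have hkey := keyIdentity hp hodd (n + 1)
  have hc := congrArg (coeff (m' + 1)) hkey
  rw [sub_mul, one_mul, map_sub, PowerSeries.coeff_succ_X_mul] at hc
  have hM : ¬ (p ^ (n + 1) ≤ m' + 1) := by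
    have hx : n < p ^ (n + 1) :=
      lt_of_lt_of_le (Nat.lt_pow_self (n := n) hp.one_lt) (Nat.pow_le_pow_right hp.pos (by omega))
    omega
  have hrhs : coeff (m' + 1) ((1 - X ^ p ^ (n + 1)) * (1 + (p : PowerSeries R) * U p (n + 1)))
      = (p : R) * coeff (m' + 1) (U p (n + 1)) := by
    rw [sub_mul, one_mul, map_sub, PowerSeries.coeff_X_pow_mul', if_neg hM, sub_zero,
      map_add, PowerSeries.coeff_one, if_neg (by omega : ¬ m' + 1 = 0), zero_add,
      ← map_natCast (C : R →+* PowerSeries R) p, PowerSeries.coeff_C_mul]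
  rw [hrhs] at hc
  rw [Nat.add_sub_cancel, hc, coeff_U hp (by omega) h2]

lemma coeff_G_zero (hp : p.Prime) (n : ℕ) : coeff 0 (G p (n + 1)) = 1 := by
  rw [PowerSeries.coeff_zero_eq_constantCoeff]
  unfold G
  rw [map_prod]
  apply Finset.prod_eq_one
  intro i _
  rw [map_pow, map_sub, map_one, map_pow, constantCoeff_X,
    zero_pow (pow_ne_zero i hp.pos.ne'), sub_zero, one_pow]

lemma coeff_G_form (hp : p.Prime) (hodd : Odd p) {n m : ℕ} (h2 : m ≤ n) :
    ∃ w : R, coeff m (G p (n + 1)) = 1 + (p : R) * w := by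
  induction m with
  | zero => exact ⟨0, by rw [coeff_G_zero hp]; ring⟩
  | succ m ih =>
    obtain ⟨w, hw⟩ := ih (by omega)
    have hstep := coeff_G_sub hp hodd (by omega : 1 ≤ m + 1) h2
    rw [Nat.add_sub_cancel] at hstep
    refine ⟨w + ((cInt p (lnzd p (m + 1)) : ℤ) : R), ?_⟩
    have h3 : coeff (m + 1) (G p (n + 1))
        = coeff m (G p (n + 1)) + (p : R) * ((cInt p (lnzd p (m + 1)) : ℤ) : R) := by
      linear_combination hstep
    rw [h3, hw]
    ring

lemma telescope (f c : ℕ → R) :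
    ∀ b a, a ≤ b → (∀ m, a < m → m ≤ b → f m - f (m - 1) = c m) →
      f b - f a = ∑ m ∈ Ioc a b, c m := by
  intro b
  induction b with
  | zero =>
    intro a ha _
    have : a = 0 := by omega
    subst this
    simp
  | succ b ih =>
    intro a ha hstep
    rcases Nat.lt_or_ge a (b + 1) with h | h
    · have hab : a ≤ b := by omega
      rw [Finset.sum_Ioc_succ_top hab, ← ih a hab (fun m hm1 hm2 => hstep m hm1 (by omega))]
      have hs := hstep (b + 1) (by omega) (by omega)
      rw [Nat.add_sub_cancel] at hs
      linear_combination hs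
    · have : a = b + 1 := by omega
      subst this
      simp

lemma main_mod (hp : p.Prime) (hodd : Odd p) {s n : ℕ} (hs : 1 ≤ s) (hn : p ^ s < n) :
    ((Acoef p ((p - 1) * (p ^ s - 1)) n : ℤ) : R)
      = ((p * ∑ m ∈ Ioc (n - p ^ s) n, cInt p (lnzd p m) : ℤ) : R) := by
  set k := (p - 1) * (p ^ s - 1) with hk
  have hA : ((Acoef p k n : ℤ) : R) = coeff n (Aser p k (n + 1)) := by
    unfold Acoef Aser
    rw [PowerSeries.coeff_map]
    rfl
  have hmaster := master hp hodd (t := n + 1) hs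
  have hB : coeff n (Aser p k (n + 1)) = coeff n ((1 - X) ^ (p ^ s) * G p (n + 1)) := by
    rw [← hmaster]
    have hsub : (X : PowerSeries R) ^ (p ^ (n + 1))
        ∣ ((1 - X ^ p ^ (n + 1)) ^ (p ^ s) - 1) := by
      have hd := sub_dvd_pow_sub_pow (1 - X ^ p ^ (n + 1) : PowerSeries R) 1 (p ^ s)
      rw [one_pow] at hd
      have he : (1 - X ^ p ^ (n + 1) : PowerSeries R) - 1 = -(X ^ p ^ (n + 1)) := by ring
      rw [he] at hd
      exact (neg_dvd).mp hd
    have hx : Aser p k (n + 1) * (1 - X ^ p ^ (n + 1)) ^ (p ^ s)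
        = Aser p k (n + 1) + Aser p k (n + 1) * ((1 - X ^ p ^ (n + 1)) ^ (p ^ s) - 1) := by
      ring
    have hzero : coeff n (Aser p k (n + 1) * ((1 - X ^ p ^ (n + 1)) ^ (p ^ s) - 1)) = 0 := by
      have hdvd2 : (X : PowerSeries R) ^ (p ^ (n + 1))
          ∣ Aser p k (n + 1) * ((1 - X ^ p ^ (n + 1)) ^ (p ^ s) - 1) :=
        Dvd.dvd.mul_left hsub _
      have hM : n < p ^ (n + 1) :=
        lt_of_lt_of_le (Nat.lt_pow_self (n := n) hp.one_lt) (Nat.pow_le_pow_right hp.pos (by omega))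
      exact (PowerSeries.X_pow_dvd_iff.mp hdvd2) n hM
    rw [hx, map_add, hzero, add_zero]
  have hqp : p ^ (s - 1) * p = p ^ s := by rw [← pow_succ]; congr 1; omega
  have hI := I1 (A := R) hp hodd (p ^ (s - 1))
  rw [hqp] at hI
  have hC : (1 - X : PowerSeries R) ^ (p ^ s)
      = 1 - X ^ (p ^ s) + (p : PowerSeries R) * Vs R p (p ^ (s - 1)) := by
    rw [freshman hp hodd hs, hI]
  rw [hA, hB, hC, add_mul, sub_mul, one_mul, map_add, map_sub,
    PowerSeries.coeff_X_pow_mul', if_pos (le_of_lt hn)]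
  have hD : coeff n ((p : PowerSeries R) * Vs R p (p ^ (s - 1)) * G p (n + 1)) = 0 := by
    rw [mul_assoc, ← map_natCast (C : R →+* PowerSeries R) p, PowerSeries.coeff_C_mul]
    unfold Vs
    rw [Finset.sum_mul, map_sum, Finset.mul_sum]
    have hterm : ∀ j ∈ Ico 1 p,
        (p : R) * coeff n (C ((cInt p j : ℤ) : R) * X ^ (p ^ (s - 1) * j)
          * G p (n + 1))
        = (p : R) * ((cInt p j : ℤ) : R) := by
      intro j hj
      rw [mem_Ico] at hj
      have hle : p ^ (s - 1) * j ≤ n := by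
        have hb1 : p ^ (s - 1) * j ≤ p ^ (s - 1) * p := Nat.mul_le_mul_left _ (by omega)
        omega
      rw [mul_assoc, PowerSeries.coeff_C_mul,
        PowerSeries.coeff_X_pow_mul', if_pos hle]
      obtain ⟨w, hw⟩ := coeff_G_form hp hodd (show n - p ^ (s - 1) * j ≤ n by omega)
      rw [hw]
      have hpp := ppR (p := p)
      linear_combination (((cInt p j : ℤ) : R) * w) * hpp
    rw [Finset.sum_congr rfl hterm, ← Finset.mul_sum, ← Int.cast_sum,
      sum_cInt hp hodd, Int.cast_zero, mul_zero]
  rw [hD, add_zero]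
  have htel := telescope (fun m => coeff m (G p (n + 1)))
    (fun m => (p : R) * ((cInt p (lnzd p m) : ℤ) : R)) n (n - p ^ s)
    (by omega)
    (fun m hm1 hm2 => coeff_G_sub hp hodd (by omega) hm2)
  rw [htel]
  push_cast
  rw [Finset.mul_sum]

end ModP2

end S9

theorem stmt9 (p s : ℕ) (hp : p.Prime) (hp3 : 3 ≤ p) (hs : 1 ≤ s)
    (n : ℕ) (hn : p ^ s < n) :
    emultiplicity (p : ℤ) (Acoef p ((p - 1) * (p ^ s - 1)) n) = 1 := by
  have hodd : Odd p := hp.odd_of_ne_two (by omega)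
  haveI := Fact.mk hp
  set b := ∑ m ∈ Ioc (n - p ^ s) n, S9.cInt p (S9.lnzd p m) with hb
  have hmain := S9.main_mod hp hodd hs hn
  have hbF : ((b : ℤ) : ZMod p) = ((S9.cInt p (S9.lnzd p (n / p ^ s)) : ℤ) : ZMod p) := by
    have hws := S9.window_sum hp hodd s n (le_of_lt hn)
    unfold S9.W at hws
    rw [hb, Int.cast_sum]
    exact hws
  have hq1 : 1 ≤ n / p ^ s := (Nat.one_le_div_iff (pow_pos hp.pos s)).mpr (le_of_lt hn)
  obtain ⟨hd1, hd2⟩ := S9.lnzd_pos hp (show n / p ^ s ≠ 0 by omega)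
  have hbne : ¬ (p : ℤ) ∣ b := by
    intro hdvd
    have hz : ((b : ℤ) : ZMod p) = 0 := by
      rw [ZMod.intCast_zmod_eq_zero_iff_dvd]
      exact_mod_cast hdvd
    rw [hbF] at hz
    exact S9.cInt_ne_zero_mod hp hd1 hd2 hz
  set a := Acoef p ((p - 1) * (p ^ s - 1)) n with ha
  have hsq : ((p : ℤ)) ^ 2 ∣ (a - p * b) := by
    have hz : ((a - p * b : ℤ) : ZMod (p ^ 2)) = 0 := by
      rw [hb]
      push_cast at hmain ⊢
      linear_combination hmain
    have h2 := (ZMod.intCast_zmod_eq_zero_iff_dvd _ (p ^ 2)).mp hz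
    exact_mod_cast h2
  have hdvd1 : (p : ℤ) ∣ a := by
    have h1 : (p : ℤ) ∣ (a - p * b) := dvd_trans ⟨p, (pow_two _)⟩ hsq
    have h2 : a = (a - p * b) + p * b := by ring
    rw [h2]
    exact dvd_add h1 ⟨b, rfl⟩
  have hdvd2 : ¬ (p : ℤ) ^ 2 ∣ a := by
    intro h
    have h2 : (p : ℤ) ^ 2 ∣ p * b := by
      have h3 : (p : ℤ) * b = a - (a - p * b) := by ring
      rw [h3]
      exact dvd_sub h hsq
    rw [pow_two] at h2
    have hp0 : (p : ℤ) ≠ 0 := by exact_mod_cast hp.pos.ne'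
    exact hbne ((mul_dvd_mul_iff_left hp0).mp h2)
  rw [← Nat.cast_one, emultiplicity_eq_coe]
  constructor
  · rwa [pow_one]
  · exact hdvd2
end

section
/- Let p ≥ 3 be a prime, u ∈ {1,…,p−1} and s ∈ ℕ₊. Then for every n ∈ ℕ, A_{p,(p−1)(u·p^s−1)}(n) ≡ ∑_{i=0}^{min(n, u·p^s)} (−1)^i · C(u·p^s, i) · D_p(n − i) (mod p^{s+1}). -/
open PowerSeries Finset

lemma dvd_coeff_of_C_dvd {c : ℤ} {f : PowerSeries ℤ} (h : C (R := ℤ) c ∣ f) (k : ℕ) :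
    c ∣ coeff (R := ℤ) k f := by
  obtain ⟨g, rfl⟩ := h; rw [coeff_C_mul]; exact Dvd.intro _ rfl

lemma C_dvd_of_forall (c : ℤ) (f : PowerSeries ℤ) (H : ∀ k, c ∣ coeff (R := ℤ) k f) :
    C (R := ℤ) c ∣ f :=
  ⟨mk fun k => coeff (R := ℤ) k f / c, by
    ext k; rw [coeff_C_mul, coeff_mk]; exact (Int.mul_ediv_cancel' (H k)).symm⟩

lemma int_dvd_of_map_zero {p : ℕ} (f : PowerSeries ℤ)
    (h : PowerSeries.map (Int.castRingHom (ZMod p)) f = 0) : C (R := ℤ) (p : ℤ) ∣ f := by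
  apply C_dvd_of_forall
  intro k
  have h2 : (Int.castRingHom (ZMod p)) (coeff (R := ℤ) k f) = 0 := by
    rw [← PowerSeries.coeff_map, h, map_zero]
  exact (ZMod.intCast_zmod_eq_zero_iff_dvd _ p).mp h2

lemma pow_p_congr {p : ℕ} (hp : p.Prime) (T : ℕ) :
    C (R := ℤ) (p : ℤ) ∣ (∏ i ∈ range T, (1 - X ^ p ^ i : PowerSeries ℤ)) ^ p
      - ∏ i ∈ range T, (1 - X ^ p ^ (i + 1) : PowerSeries ℤ) := by
  apply int_dvd_of_map_zero
  haveI : Fact p.Prime := ⟨hp⟩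
  haveI : CharP (PowerSeries (ZMod p)) p :=
    charP_of_injective_ringHom (PowerSeries.C_injective) p
  rw [map_sub, map_pow, map_prod, map_prod]
  have h1 : ∀ i ∈ range T,
      PowerSeries.map (Int.castRingHom (ZMod p)) (1 - X ^ p ^ i : PowerSeries ℤ)
        = (1 - X ^ p ^ i : PowerSeries (ZMod p)) := by
    intro i _; rw [map_sub, map_one, map_pow, PowerSeries.map_X]
  have h2 : ∀ i ∈ range T,
      PowerSeries.map (Int.castRingHom (ZMod p)) (1 - X ^ p ^ (i+1) : PowerSeries ℤ)
        = (1 - X ^ p ^ (i+1) : PowerSeries (ZMod p)) := by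
    intro i _; rw [map_sub, map_one, map_pow, PowerSeries.map_X]
  rw [Finset.prod_congr rfl h1, Finset.prod_congr rfl h2, ← Finset.prod_pow]
  rw [sub_eq_zero]
  apply Finset.prod_congr rfl
  intro i _
  rw [sub_pow_char, one_pow, ← pow_mul, ← pow_succ]

lemma prod_sub_one_dvd {ι : Type*} {R : Type*} [CommRing R] {S : Finset ι} (f : ι → R) (z : R)
    (h : ∀ i ∈ S, z ∣ f i - 1) : z ∣ (∏ i ∈ S, f i) - 1 := by
  classical
  induction S using Finset.induction with
  | empty => simp
  | @insert a S ha ih =>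
    rw [Finset.prod_insert ha]
    have hrw : f a * ∏ i ∈ S, f i - 1 = f a * ((∏ i ∈ S, f i) - 1) + (f a - 1) := by ring
    rw [hrw]
    exact dvd_add ((ih fun i hi => h i (Finset.mem_insert_of_mem hi)).mul_left _)
      (h a (Finset.mem_insert_self a S))

lemma coeff_prod_trunc {p : ℕ} (hp2 : 2 ≤ p) (r m a b : ℕ) (hma : m < a) (hab : a ≤ b) :
    coeff (R := ℤ) m (∏ i ∈ range b, (1 - X ^ p ^ i : PowerSeries ℤ) ^ r) =
    coeff (R := ℤ) m (∏ i ∈ range a, (1 - X ^ p ^ i : PowerSeries ℤ) ^ r) := by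
  rw [← Finset.prod_range_mul_prod_Ico _ hab]
  have hQ : (X : PowerSeries ℤ) ^ (m + 1) ∣
      (∏ i ∈ Finset.Ico a b, (1 - X ^ p ^ i : PowerSeries ℤ) ^ r) - 1 := by
    apply prod_sub_one_dvd
    intro i hi
    have hi' : a ≤ i := (Finset.mem_Ico.mp hi).1
    have h1 : ((1 - X ^ p ^ i : PowerSeries ℤ) - 1) ∣ (1 - X ^ p ^ i) ^ r - 1 := by
      have := sub_dvd_pow_sub_pow (1 - X ^ p ^ i : PowerSeries ℤ) 1 r
      rwa [one_pow] at this
    have h2 : (X : PowerSeries ℤ) ^ p ^ i ∣ (1 - X ^ p ^ i) ^ r - 1 := by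
      rw [show (1 - X ^ p ^ i : PowerSeries ℤ) - 1 = -(X ^ p ^ i) by ring, neg_dvd] at h1
      exact h1
    refine dvd_trans (pow_dvd_pow X ?_) h2
    have : i < p ^ i := Nat.lt_pow_self (by omega : 1 < p)
    omega
  obtain ⟨q, hq⟩ := hQ
  have hsplit : (∏ i ∈ range a, (1 - X ^ p ^ i : PowerSeries ℤ) ^ r) *
      ∏ i ∈ Finset.Ico a b, (1 - X ^ p ^ i : PowerSeries ℤ) ^ r
      = (∏ i ∈ range a, (1 - X ^ p ^ i : PowerSeries ℤ) ^ r) +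
        (∏ i ∈ range a, (1 - X ^ p ^ i : PowerSeries ℤ) ^ r) * (X ^ (m+1) * q) := by
    rw [← hq]; ring
  rw [hsplit, map_add]
  have hz : coeff (R := ℤ) m ((∏ i ∈ range a, (1 - X ^ p ^ i : PowerSeries ℤ) ^ r) * (X ^ (m+1) * q)) = 0 := by
    have : (X : PowerSeries ℤ) ^ (m+1) ∣
        (∏ i ∈ range a, (1 - X ^ p ^ i : PowerSeries ℤ) ^ r) * (X ^ (m+1) * q) :=
      ⟨(∏ i ∈ range a, (1 - X ^ p ^ i : PowerSeries ℤ) ^ r) * q, by ring⟩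
    exact PowerSeries.X_pow_dvd_iff.mp this m (Nat.lt_succ_self m)
  rw [hz, add_zero]

lemma choose_pow_dvd {p u s : ℕ} (hp : p.Prime) (j : ℕ) (hj : 1 ≤ j) (hjN : j ≤ u * p ^ s)
    (hu : 1 ≤ u) : p ^ (s + 1) ∣ (u * p ^ s).choose j * p ^ j := by
  rcases le_or_gt (s + 1) j with h | h
  · exact Dvd.dvd.mul_left (pow_dvd_pow p h) _
  · set N := u * p ^ s with hN
    have hposN : 0 < N := Nat.mul_pos hu (Nat.pow_pos (n := s) hp.pos)
    have hCpos : 0 < N.choose j := Nat.choose_pos hjN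
    have key : p ^ s ∣ N.choose j * j := by
      have hid : N * (N - 1).choose (j - 1) = N.choose j * j := by
        have h3 := Nat.add_one_mul_choose_eq (N - 1) (j - 1)
        rwa [Nat.sub_add_cancel hposN, Nat.sub_add_cancel hj] at h3
      rw [← hid]
      exact (dvd_mul_left (p ^ s) u).mul_right _
    have h1 : s ≤ (N.choose j).factorization p + j.factorization p := by
      have h4 := (hp.pow_dvd_iff_le_factorization
        (Nat.mul_ne_zero hCpos.ne' (by omega))).mp key
      rwa [Nat.factorization_mul hCpos.ne' (by omega), Finsupp.add_apply] at h4
    have h2 : j.factorization p < j := by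
      have hd : p ^ j.factorization p ∣ j := Nat.ordProj_dvd j p
      have hle := Nat.le_of_dvd hj hd
      by_contra hcon
      push_neg at hcon
      have hh1 : p ^ j ≤ p ^ j.factorization p := Nat.pow_le_pow_right hp.one_lt.le hcon
      have hh2 : j < p ^ j := Nat.lt_pow_self hp.one_lt
      omega
    refine (hp.pow_dvd_iff_le_factorization (Nat.mul_ne_zero hCpos.ne' (pow_ne_zero j hp.pos.ne'))).mpr ?_
    rw [Nat.factorization_mul hCpos.ne' (pow_ne_zero j hp.pos.ne'), Finsupp.add_apply,
      Nat.Prime.factorization_pow hp, Finsupp.single_eq_same]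
    omega

lemma coeff_one_sub_X_pow_s14 (N i : ℕ) :
    coeff (R := ℤ) i ((1 - X : PowerSeries ℤ) ^ N) = (-1) ^ i * N.choose i := by
  have hterm : ∀ k, coeff (R := ℤ) i ((-X : PowerSeries ℤ) ^ k * 1 ^ (N - k) * (N.choose k : PowerSeries ℤ))
      = if i = k then (-1) ^ k * (N.choose k : ℤ) else 0 := by
    intro k
    rw [one_pow, mul_one, show ((N.choose k : ℕ) : PowerSeries ℤ) = C (R := ℤ) ((N.choose k : ℕ) : ℤ)
      from (map_natCast (C (R := ℤ)) _).symm, coeff_mul_C, neg_pow,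
      show ((-1 : PowerSeries ℤ)) ^ k = C (R := ℤ) ((-1) ^ k) from by rw [map_pow, map_neg, map_one],
      coeff_C_mul, coeff_X_pow]
    split <;> ring
  rw [show (1 - X : PowerSeries ℤ) = -X + 1 by ring, add_pow, map_sum]
  rcases le_or_gt i N with h | h
  · rw [Finset.sum_congr rfl (fun k _ => hterm k), Finset.sum_ite_eq (range (N + 1)) i,
      if_pos (Finset.mem_range.mpr (by omega))]
  · rw [Finset.sum_congr rfl (fun k _ => hterm k), Finset.sum_ite_eq (range (N + 1)) i,
      if_neg (by simp; omega), Nat.choose_eq_zero_of_lt h]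
    simp

theorem stmt14 (p u s : ℕ) (hp : p.Prime) (hp3 : 3 ≤ p) (hu1 : 1 ≤ u) (hu2 : u ≤ p - 1)
    (hs : 1 ≤ s) (n : ℕ) :
    (p : ℤ) ^ (s + 1) ∣
      Acoef p ((p - 1) * (u * p ^ s - 1)) n -
        ∑ i ∈ Finset.range (min n (u * p ^ s) + 1),
          (-1 : ℤ) ^ i * ((u * p ^ s).choose i : ℤ) * Dp p (n - i) := by
  have hp2 : 2 ≤ p := hp.two_le
  have hchoose : ∀ j, 1 ≤ j → j ≤ u * p ^ s →
      (p : ℤ) ^ (s + 1) ∣ ((u * p ^ s).choose j : ℤ) * (p : ℤ) ^ j := by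
    intro j hj hjN
    have := Int.natCast_dvd_natCast.mpr (choose_pow_dvd hp j hj hjN hu1)
    push_cast at this
    exact this
  set N := u * p ^ s with hNdef
  set K := (p - 1) * (N - 1) with hKdef
  have hN : 1 ≤ N := Nat.one_le_iff_ne_zero.mpr
    (Nat.mul_ne_zero (by omega) (pow_ne_zero s (by omega)))
  set E : PowerSeries ℤ := ∏ i ∈ range (n + 1), (1 - X ^ p ^ i) with hEdef
  set Ei : PowerSeries ℤ :=
    ∏ i ∈ range (n + 1), PowerSeries.invOfUnit (1 - X ^ p ^ i) 1 with hEidef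
  have hunit : E * Ei = 1 := by
    rw [hEdef, hEidef, ← Finset.prod_mul_distrib]
    apply Finset.prod_eq_one
    intro i _
    refine PowerSeries.mul_invOfUnit _ _ ?_
    have hx : constantCoeff (R := ℤ) ((X : PowerSeries ℤ) ^ p ^ i) = 0 := by
      rw [map_pow, constantCoeff_X, zero_pow (pow_ne_zero i (by omega : p ≠ 0))]
    rw [map_sub, map_one, hx, sub_zero, Units.val_one]
  have hA : Acoef p K n = coeff (R := ℤ) n (Ei ^ K) := by
    rw [hEidef, ← Finset.prod_pow]
    rfl
  -- char p step
  obtain ⟨g, hg0⟩ := pow_p_congr hp (n + 1)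
  have hg : E ^ p = (∏ i ∈ range (n + 1), (1 - X ^ p ^ (i + 1) : PowerSeries ℤ)) + C (R := ℤ) p * g := by
    rw [← hg0, hEdef]; ring
  -- shift step
  have hshift : (1 - X) * (∏ i ∈ range (n + 1), (1 - X ^ p ^ (i + 1) : PowerSeries ℤ))
      = E * (1 - X ^ p ^ (n + 1)) := by
    have h1 := Finset.prod_range_succ' (fun i => (1 - X ^ p ^ i : PowerSeries ℤ)) (n + 1)
    have h2 := Finset.prod_range_succ (fun i => (1 - X ^ p ^ i : PowerSeries ℤ)) (n + 1)
    simp only [pow_zero, pow_one] at h1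
    rw [hEdef, ← h2, h1]
    ring
  set W : PowerSeries ℤ := (1 - X) * E ^ (p - 1) with hWdef0
  have hWE : W * E = E * (1 - X ^ p ^ (n + 1)) + C (R := ℤ) p * ((1 - X) * g) := by
    have hEp : E ^ (p - 1) * E = E ^ p := by
      rw [← pow_succ]; congr 1; omega
    calc W * E = (1 - X) * (E ^ (p - 1) * E) := by rw [hWdef0]; ring
    _ = (1 - X) * E ^ p := by rw [hEp]
    _ = (1 - X) * (∏ i ∈ range (n + 1), (1 - X ^ p ^ (i + 1) : PowerSeries ℤ))
        + C (R := ℤ) p * ((1 - X) * g) := by rw [hg]; ring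
    _ = E * (1 - X ^ p ^ (n + 1)) + C (R := ℤ) p * ((1 - X) * g) := by rw [hshift]
  obtain ⟨h, hWdef⟩ : ∃ h, W = (1 - X ^ p ^ (n + 1)) + C (R := ℤ) p * h := by
    refine ⟨(1 - X) * g * Ei, ?_⟩
    calc W = W * (E * Ei) := by rw [hunit, mul_one]
    _ = (W * E) * Ei := by ring
    _ = (E * (1 - X ^ p ^ (n + 1)) + C (R := ℤ) p * ((1 - X) * g)) * Ei := by rw [hWE]
    _ = (E * Ei) * (1 - X ^ p ^ (n + 1)) + C (R := ℤ) p * ((1 - X) * g * Ei) := by ring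
    _ = (1 - X ^ p ^ (n + 1)) + C (R := ℤ) p * ((1 - X) * g * Ei) := by rw [hunit, one_mul]
  -- binomial expansion of W^N
  obtain ⟨A, B, hSdvd, hWN⟩ : ∃ A B : PowerSeries ℤ,
      C (R := ℤ) ((p : ℤ) ^ (s + 1)) ∣ A ∧ W ^ N = 1 + A + X ^ p ^ (n + 1) * B := by
    have hpow := add_pow (1 - X ^ p ^ (n + 1) : PowerSeries ℤ) (C (R := ℤ) p * h) N
    rw [← hWdef, Finset.sum_range_succ] at hpow
    simp only [Nat.sub_self, pow_zero, mul_one, Nat.choose_self, Nat.cast_one] at hpow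
    have hS : C (R := ℤ) ((p : ℤ) ^ (s + 1)) ∣ ∑ k ∈ range N,
        (1 - X ^ p ^ (n + 1) : PowerSeries ℤ) ^ k * (C (R := ℤ) p * h) ^ (N - k)
          * (N.choose k : PowerSeries ℤ) := by
      apply Finset.dvd_sum
      intro k hk
      have hk' : k < N := Finset.mem_range.mp hk
      have hdz : (p : ℤ) ^ (s + 1) ∣ (N.choose (N - k) : ℤ) * (p : ℤ) ^ (N - k) :=
        hchoose (N - k) (by omega) (by omega)
      rw [Nat.choose_symm hk'.le] at hdz
      have hterm : (1 - X ^ p ^ (n + 1) : PowerSeries ℤ) ^ k * (C (R := ℤ) p * h) ^ (N - k)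
          * (N.choose k : PowerSeries ℤ)
          = C (R := ℤ) ((N.choose k : ℤ) * (p : ℤ) ^ (N - k))
            * ((1 - X ^ p ^ (n + 1)) ^ k * h ^ (N - k)) := by
        rw [mul_pow, map_mul, map_pow,
          show ((N.choose k : ℕ) : PowerSeries ℤ) = C (R := ℤ) ((N.choose k : ℕ) : ℤ)
            from (map_natCast (C (R := ℤ)) _).symm]
        ring
      rw [hterm]
      exact Dvd.dvd.mul_right (map_dvd (C (R := ℤ)) hdz) _
    have hY : ∃ B : PowerSeries ℤ,
        (1 - X ^ p ^ (n + 1) : PowerSeries ℤ) ^ N = 1 + X ^ p ^ (n + 1) * B := by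
      have hd := sub_dvd_pow_sub_pow (1 - X ^ p ^ (n + 1) : PowerSeries ℤ) 1 N
      rw [one_pow, show (1 - X ^ p ^ (n + 1) : PowerSeries ℤ) - 1 = -(X ^ p ^ (n + 1)) by ring,
        neg_dvd] at hd
      obtain ⟨B, hB⟩ := hd
      exact ⟨B, by rw [← hB]; ring⟩
    obtain ⟨B, hB⟩ := hY
    refine ⟨_, B, hS, ?_⟩
    rw [hpow, hB]
    ring
  -- key identity
  have hkey : Ei ^ K * W ^ N = (1 - X) ^ N * E ^ (p - 1) := by
    have hWpow : W ^ N = (1 - X) ^ N * E ^ ((p - 1) * N) := by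
      rw [hWdef0, mul_pow, ← pow_mul]
    have hexp : (p - 1) * N = K + (p - 1) := by
      have h5 : N - 1 + 1 = N := Nat.sub_add_cancel hN
      calc (p - 1) * N = (p - 1) * (N - 1 + 1) := by rw [h5]
      _ = K + (p - 1) := by rw [hKdef]; ring
    rw [hWpow, hexp, pow_add]
    calc Ei ^ K * ((1 - X) ^ N * (E ^ K * E ^ (p - 1)))
        = (E * Ei) ^ K * ((1 - X) ^ N * E ^ (p - 1)) := by rw [mul_pow]; ring
    _ = (1 - X) ^ N * E ^ (p - 1) := by rw [hunit, one_pow, one_mul]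
  -- the sum is a coefficient of (1-X)^N * E^(p-1)
  have hDp : ∀ k, k ≤ n → coeff (R := ℤ) (n - k) (E ^ (p - 1)) = Dp p (n - k) := by
    intro k hk
    rw [hEdef, ← Finset.prod_pow, Dp, Dcoef]
    exact coeff_prod_trunc hp2 (p - 1) (n - k) (n - k + 1) (n + 1) (Nat.lt_succ_self _) (by omega)
  have hsum : (∑ i ∈ range (min n N + 1), (-1 : ℤ) ^ i * (N.choose i : ℤ) * Dp p (n - i))
      = coeff (R := ℤ) n ((1 - X) ^ N * E ^ (p - 1)) := by
    rw [PowerSeries.coeff_mul, Finset.Nat.sum_antidiagonal_eq_sum_range_succ_mk]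
    have h1 : ∀ k ∈ range (min n N + 1),
        (-1 : ℤ) ^ k * (N.choose k : ℤ) * Dp p (n - k)
          = coeff (R := ℤ) k ((1 - X : PowerSeries ℤ) ^ N) * coeff (R := ℤ) (n - k) (E ^ (p - 1)) := by
      intro k hk
      have hk' : k ≤ min n N := by
        have := Finset.mem_range.mp hk; omega
      rw [coeff_one_sub_X_pow_s14, hDp k (by omega), mul_assoc]
    rw [Finset.sum_congr rfl h1]
    apply Finset.sum_subset (Finset.range_subset_range.mpr (by omega))
    intro x hx hnx
    have hx1 : x ≤ n := by have := Finset.mem_range.mp hx; omega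
    have hxN : N < x := by
      have h2 : ¬ x < min n N + 1 := fun hcon => hnx (Finset.mem_range.mpr hcon)
      omega
    rw [coeff_one_sub_X_pow_s14, Nat.choose_eq_zero_of_lt hxN]
    simp
  -- conclude
  rw [hA, hsum, ← map_sub]
  have hdiff : Ei ^ K - (1 - X) ^ N * E ^ (p - 1)
      = -(Ei ^ K * A) - Ei ^ K * (X ^ p ^ (n + 1) * B) := by
    rw [← hkey, hWN]; ring
  rw [hdiff, map_sub, map_neg]
  have c2 : coeff (R := ℤ) n (Ei ^ K * (X ^ p ^ (n + 1) * B)) = 0 := by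
    have hdvd : (X : PowerSeries ℤ) ^ p ^ (n + 1) ∣ Ei ^ K * (X ^ p ^ (n + 1) * B) :=
      ⟨Ei ^ K * B, by ring⟩
    have hlt : n < p ^ (n + 1) := by
      have := Nat.lt_pow_self (n := n + 1) hp.one_lt; omega
    exact PowerSeries.X_pow_dvd_iff.mp hdvd n hlt
  rw [c2, sub_zero]
  exact dvd_neg.mpr (dvd_coeff_of_C_dvd (hSdvd.mul_left _) n)
end
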